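/- arXiv:1908.00857 — 6 statements merged into one kernel-verified Lean document; each statement's English description precedes it below -/
import Mathlib

section
/- Let p, q, r be integers with p ≠ 0, gcd(p, q) = 1, |p| ≥ q ≥ 1, r ≥ 2 and r even, and set n = qr, m = |p|·r. Assume the standard diagram of T(pr, qr) admits a nontrivial Z-coloring, i.e. there exists x ∈ ℤ^n with T_n^m(x) = x such that C(x) has at least two elements. Then the minimal number of colors of a nontrivial Z-coloring of this diagram equals four: there exists x ∈ ℤ^n with T_n^m(x) = x such that C(x) has exactly four elements, and every x ∈ ℤ^n with T_n^m(x) = x for which C(x) has at least two elements satisfies that C(x) has at least four elements. -/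
/-- The twist map `T_n : ℤ^n → ℤ^n`,
`T_n(x_1,…,x_n) = (2x_1 − x_2, 2x_1 − x_3, …, 2x_1 − x_n, x_1)` (0-indexed). -/
def twist (n : ℕ) (x : Fin n → ℤ) : Fin n → ℤ :=
  fun i => if h : (i : ℕ) + 1 < n then 2 * x ⟨0, i.pos⟩ - x ⟨(i : ℕ) + 1, h⟩ else x ⟨0, i.pos⟩

/-- The set of colors `C(x) = { (T_n^k(x))_i : 0 ≤ k < m, 1 ≤ i ≤ n }`. -/
def colors (n m : ℕ) (x : Fin n → ℤ) : Set ℤ :=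
  {c | ∃ k, k < m ∧ ∃ i : Fin n, (twist n)^[k] x i = c}

def ent (n : ℕ) (hn : 0 < n) (x : Fin n → ℤ) (k i : ℕ) : ℤ :=
  (twist n)^[k] x ⟨i % n, Nat.mod_lt _ hn⟩

section
variable (n m : ℕ) (hn : 0 < n) (hm : 0 < m) (x : Fin n → ℤ) (hfix : (twist n)^[m] x = x)

lemma ent_apply_fin (k : ℕ) (j : Fin n) : (twist n)^[k] x j = ent n hn x k j.val := by
  simp only [ent, Nat.mod_eq_of_lt j.isLt, Fin.eta]

lemma twist_const (v : ℤ) : twist n (fun _ => v) = fun _ => v := by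
  funext j; unfold twist; split <;> ring

lemma iter_twist_const (v : ℤ) (d : ℕ) : (twist n)^[d] (fun _ => v) = fun _ => v := by
  induction d with
  | zero => rfl
  | succ d ih => rw [Function.iterate_succ_apply', ih, twist_const]

include hfix in
lemma iter_mul (t : ℕ) : (twist n)^[m * t] x = x := by
  induction t with
  | zero => simp
  | succ t ih => rw [Nat.mul_succ, Function.iterate_add_apply, hfix, ih]

include hfix hm in
lemma colors_sub_of_const (k₀ : ℕ) (v : ℤ) (hconst : (twist n)^[k₀] x = fun _ => v) :
    colors n m x ⊆ {v} := by
  rintro c ⟨k, hk, i, rfl⟩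
  have h1 : (twist n)^[k] x = (twist n)^[k + k₀ * m] x := by
    rw [Function.iterate_add_apply, Nat.mul_comm, iter_mul n m x hfix]
  have hk0 : k₀ ≤ k + k₀ * m := by
    have : k₀ * 1 ≤ k₀ * m := Nat.mul_le_mul_left _ hm
    omega
  have h2 : k + k₀ * m = (k + k₀ * m - k₀) + k₀ := by omega
  rw [h1, h2, Function.iterate_add_apply, hconst, iter_twist_const]
  rfl

lemma ent_succ_lt (k i : ℕ) (h : i + 1 < n) :
    ent n hn x (k+1) i = 2 * ent n hn x k 0 - ent n hn x k (i+1) := by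
  have hi : i % n = i := Nat.mod_eq_of_lt (by omega)
  have hi1 : (i+1) % n = i + 1 := Nat.mod_eq_of_lt h
  unfold ent
  rw [Function.iterate_succ_apply']
  simp only [twist, hi, hi1]
  rw [dif_pos (by simpa [hi] using h)]
  congr 1

lemma ent_succ_last (k : ℕ) :
    ent n hn x (k+1) (n-1) = ent n hn x k 0 := by
  have hi : (n-1) % n = n-1 := Nat.mod_eq_of_lt (by omega)
  unfold ent
  rw [Function.iterate_succ_apply']
  simp only [twist, hi]
  rw [dif_neg (by omega)]
  congr 1

include hfix hm in
lemma ent_mem (k i : ℕ) : ent n hn x k i ∈ colors n m x := by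
  refine ⟨k % m, Nat.mod_lt _ hm, ⟨i % n, Nat.mod_lt _ hn⟩, ?_⟩
  have h1 : (twist n)^[k] x = (twist n)^[k % m] x := by
    conv_lhs => rw [← Nat.div_add_mod k m]
    rw [Nat.add_comm, Function.iterate_add_apply, iter_mul n m x hfix]
  rw [← h1]; rfl

lemma ent_const_prop (v : ℤ) (h0 : ∀ k, ent n hn x k 0 = v) :
    ∀ i, i < n → ∀ k, ent n hn x k i = v := by
  intro i
  induction i with
  | zero => intro _ k; exact h0 k
  | succ i ih =>
    intro hi k
    have h1 := ent_succ_lt n hn x k i hi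
    have h2 := ih (by omega) (k+1)
    have h3 := h0 k
    omega

include hfix hm hn in
lemma encard_le_one_of_const (v : ℤ) (h : ∀ i, i < n → ∀ k, ent n hn x k i = v) :
    (colors n m x).encard ≤ 1 := by
  have hsub : colors n m x ⊆ {v} := by
    apply colors_sub_of_const n m hm x hfix 0
    funext j
    have := h j.val j.isLt 0
    rw [ent_apply_fin n hn x 0 j] ; exact this
  calc (colors n m x).encard ≤ ({v} : Set ℤ).encard := Set.encard_mono hsub
    _ = 1 := Set.encard_singleton v

include hfix hm hn in
lemma lower_bound (h2 : 2 ≤ (colors n m x).encard) : 4 ≤ (colors n m x).encard := by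
  by_cases hfin : (colors n m x).Finite
  swap
  · rw [Set.Infinite.encard_eq hfin]; exact le_top
  set C := colors n m x with hC
  set F := hfin.toFinset with hF
  have hcardeq : C.encard = (F.card : ℕ∞) := hfin.encard_eq_coe_toFinset_card
  have hmemF : ∀ c, c ∈ C → c ∈ F := fun c hc => hfin.mem_toFinset.2 hc
  have hcard2 : 2 ≤ F.card := by
    rw [hcardeq] at h2; exact_mod_cast h2
  have hne : F.Nonempty := Finset.card_pos.1 (by omega)
  set u := F.min' hne with hu
  set w := F.max' hne with hw
  have huw : u < w := F.min'_lt_max'_of_card (by omega)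
  -- no first entry can be the max
  have hnotmax : ∀ k, ent n hn x k 0 ≠ w := by
    intro k hk
    have hall : ∀ i, i < n → ent n hn x k i = w := by
      intro i hi
      rcases Nat.eq_zero_or_pos i with h0 | h0
      · rw [h0]; exact hk
      · have hrefl := ent_succ_lt n hn x k (i-1) (by omega)
        rw [Nat.sub_add_cancel h0] at hrefl
        have m1 : ent n hn x k i ∈ F := hmemF _ (ent_mem n m hn hm x hfix k i)
        have m2 : ent n hn x (k+1) (i-1) ∈ F := hmemF _ (ent_mem n m hn hm x hfix (k+1) (i-1))
        have le1 : ent n hn x k i ≤ w := F.le_max' _ m1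
        have le2 : ent n hn x (k+1) (i-1) ≤ w := F.le_max' _ m2
        omega
    have hconst : (twist n)^[k] x = fun _ => w := by
      funext j
      rw [ent_apply_fin n hn x k j]; exact hall j.val j.isLt
    have := Set.encard_mono (colors_sub_of_const n m hm x hfix k w hconst)
    rw [Set.encard_singleton] at this
    have : C.encard ≤ 1 := this
    exact absurd (le_trans h2 this) (by norm_num)
  have hnotmin : ∀ k, ent n hn x k 0 ≠ u := by
    intro k hk
    have hall : ∀ i, i < n → ent n hn x k i = u := by
      intro i hi
      rcases Nat.eq_zero_or_pos i with h0 | h0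
      · rw [h0]; exact hk
      · have hrefl := ent_succ_lt n hn x k (i-1) (by omega)
        rw [Nat.sub_add_cancel h0] at hrefl
        have m1 : ent n hn x k i ∈ F := hmemF _ (ent_mem n m hn hm x hfix k i)
        have m2 : ent n hn x (k+1) (i-1) ∈ F := hmemF _ (ent_mem n m hn hm x hfix (k+1) (i-1))
        have le1 : u ≤ ent n hn x k i := F.min'_le _ m1
        have le2 : u ≤ ent n hn x (k+1) (i-1) := F.min'_le _ m2
        omega
    have hconst : (twist n)^[k] x = fun _ => u := by
      funext j
      rw [ent_apply_fin n hn x k j]; exact hall j.val j.isLt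
    have := Set.encard_mono (colors_sub_of_const n m hm x hfix k u hconst)
    rw [Set.encard_singleton] at this
    have : C.encard ≤ 1 := this
    exact absurd (le_trans h2 this) (by norm_num)
  by_contra h4
  have hcard3 : F.card ≤ 3 := by
    rw [hcardeq] at h4
    have : ¬ (4:ℕ∞) ≤ (F.card : ℕ∞) := h4
    by_contra hc
    exact this (by exact_mod_cast (by omega : 4 ≤ F.card))
  set a := ent n hn x 0 0 with ha
  by_cases hconst0 : ∀ k, ent n hn x k 0 = a
  · have hall := ent_const_prop n hn x a hconst0
    have := encard_le_one_of_const n m hn hm x hfix a hall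
    exact absurd (le_trans h2 this) (by norm_num)
  · push_neg at hconst0
    obtain ⟨k, hk⟩ := hconst0
    set b := ent n hn x k 0 with hb
    have hau : a ≠ u := hnotmin 0
    have haw : a ≠ w := hnotmax 0
    have hbu : b ≠ u := hnotmin k
    have hbw : b ≠ w := hnotmax k
    have hmu : u ∈ F := F.min'_mem hne
    have hmw : w ∈ F := F.max'_mem hne
    have hma : a ∈ F := hmemF _ (ent_mem n m hn hm x hfix 0 0)
    have hmb : b ∈ F := hmemF _ (ent_mem n m hn hm x hfix k 0)
    have hsub : ({u, w, a, b} : Finset ℤ) ⊆ F := by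
      intro c hc
      simp only [Finset.mem_insert, Finset.mem_singleton] at hc
      rcases hc with rfl | rfl | rfl | rfl <;> assumption
    have hcard4 : ({u, w, a, b} : Finset ℤ).card = 4 := by
      rw [Finset.card_insert_of_notMem (by simp; omega),
          Finset.card_insert_of_notMem (by simp; omega),
          Finset.card_insert_of_notMem (by simp; omega),
          Finset.card_singleton]
    have := Finset.card_le_card hsub
    omega

end

def psi (r K j : ℕ) : ℤ :=
  if K = 0 then (if j = 1 ∨ j = 2 then 1 else 0)
  else if K = 1 then (if j = 0 ∨ j = 1 then -1 else 0)
  else if K = 2 then (if j = r - 1 ∨ j = 0 then -1 else -2)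
  else (-1)^K * (if j = r + 1 - K ∨ j = r + 2 - K then 1 else 0)

lemma psi_zero (r j : ℕ) : psi r 0 j = if j = 1 ∨ j = 2 then 1 else 0 := by simp [psi]

lemma psi_one (r j : ℕ) : psi r 1 j = if j = 0 ∨ j = 1 then -1 else 0 := by simp [psi]

lemma psi_two (r j : ℕ) : psi r 2 j = if j = r - 1 ∨ j = 0 then -1 else -2 := by simp [psi]

lemma psi_ge3 (r K j : ℕ) (h : 3 ≤ K) :
    psi r K j = (-1)^K * (if j = r + 1 - K ∨ j = r + 2 - K then 1 else 0) := by
  unfold psi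
  rw [if_neg (by omega), if_neg (by omega), if_neg (by omega)]

lemma psi_zero_zero (r : ℕ) : psi r 0 0 = 0 := by simp [psi]
lemma psi_one_zero (r : ℕ) : psi r 1 0 = -1 := by simp [psi]
lemma psi_two_zero (r : ℕ) : psi r 2 0 = -1 := by simp [psi]
lemma psi_ge3_zero (r K : ℕ) (h3 : 3 ≤ K) (hK : K < r) : psi r K 0 = 0 := by
  rw [psi_ge3 r K 0 h3, if_neg (by omega), mul_zero]

lemma psi_master (r : ℕ) (hr : 4 ≤ r) (hre : Even r) (K : ℕ) (hK : K < r) (j : ℕ) (hj : j < r) :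
    psi r ((K+1) % r) j = 2 * psi r K 0 - psi r K ((j+1) % r) := by
  have h1r : (0+1) % r = 1 := Nat.mod_eq_of_lt (by omega)
  have h2r : (1+1) % r = 2 := Nat.mod_eq_of_lt (by omega)
  have h3r : (2+1) % r = 3 := Nat.mod_eq_of_lt (by omega)
  rcases Nat.lt_or_ge (j+1) r with hjr | hjr
  · rw [Nat.mod_eq_of_lt hjr]
    rcases Nat.lt_or_ge K 3 with hK3 | hK3
    · interval_cases K
      · rw [h1r, psi_one, psi_zero_zero, psi_zero r (j+1)]
        split_ifs <;> (try simp only [false_or, or_false] at *) <;> omega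
      · rw [h2r, psi_two, psi_one_zero, psi_one r (j+1)]
        split_ifs <;> (try simp only [false_or, or_false] at *) <;> omega
      · rw [h3r, psi_ge3 r 3 j (by omega), psi_two_zero, psi_two r (j+1),
            show ((-1:ℤ)^3) = -1 from by norm_num]
        split_ifs <;> (try simp only [false_or, or_false] at *) <;> omega
    · rcases Nat.lt_or_ge (K+1) r with hKr | hKr
      · rw [Nat.mod_eq_of_lt hKr, psi_ge3 r (K+1) j (by omega),
            psi_ge3_zero r K hK3 hK, psi_ge3 r K (j+1) (by omega), pow_succ]
        rcases Nat.even_or_odd K with he | ho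
        · rw [he.neg_one_pow]; split_ifs <;> (try simp only [false_or, or_false] at *) <;> omega
        · rw [ho.neg_one_pow]; split_ifs <;> (try simp only [false_or, or_false] at *) <;> omega
      · have hKr' : K + 1 = r := by omega
        rw [hKr', Nat.mod_self, psi_zero, psi_ge3_zero r K hK3 hK, psi_ge3 r K (j+1) (by omega)]
        have hKodd : Odd K := by
          rcases hre with ⟨t, ht⟩
          exact ⟨t - 1, by omega⟩
        rw [hKodd.neg_one_pow]
        split_ifs <;> (try simp only [false_or, or_false] at *) <;> omega
  · have hj1 : j + 1 = r := by omega
    rw [hj1, Nat.mod_self]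
    rcases Nat.lt_or_ge K 3 with hK3 | hK3
    · interval_cases K
      · rw [h1r, psi_one, psi_zero_zero]
        split_ifs <;> (try simp only [false_or, or_false] at *) <;> omega
      · rw [h2r, psi_two, psi_one_zero]
        split_ifs <;> (try simp only [false_or, or_false] at *) <;> omega
      · rw [h3r, psi_ge3 r 3 j (by omega), psi_two_zero,
            show ((-1:ℤ)^3) = -1 from by norm_num]
        split_ifs <;> (try simp only [false_or, or_false] at *) <;> omega
    · rcases Nat.lt_or_ge (K+1) r with hKr | hKr
      · rw [Nat.mod_eq_of_lt hKr, psi_ge3 r (K+1) j (by omega),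
            psi_ge3_zero r K hK3 hK, pow_succ]
        rcases Nat.even_or_odd K with he | ho
        · rw [he.neg_one_pow]; split_ifs <;> (try simp only [false_or, or_false] at *) <;> omega
        · rw [ho.neg_one_pow]; split_ifs <;> (try simp only [false_or, or_false] at *) <;> omega
      · have hKr' : K + 1 = r := by omega
        rw [hKr', Nat.mod_self, psi_zero, psi_ge3_zero r K hK3 hK]
        split_ifs <;> (try simp only [false_or, or_false] at *) <;> omega

lemma psi_values (r K j : ℕ) :
    psi r K j = -2 ∨ psi r K j = -1 ∨ psi r K j = 0 ∨ psi r K j = 1 := by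
  unfold psi
  rcases Nat.even_or_odd K with he | ho
  · rw [he.neg_one_pow]; split_ifs <;> norm_num
  · rw [ho.neg_one_pow]; split_ifs <;> norm_num

section
variable (n m R Q t : ℕ) (hR4 : 4 ≤ R) (hRe : Even R) (hQ : 1 ≤ Q) (ht : 1 ≤ t)
  (hn : n = Q * R) (hm : m = t * R)

include hR4 hRe hQ hn in
lemma orbit_formula : ∀ k, (twist n)^[k] (fun i : Fin n => psi R 0 (i.val % R)) =
    fun i : Fin n => psi R (k % R) (i.val % R) := by
  have hR0 : 0 < R := by omega
  intro k
  induction k with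
  | zero => simp
  | succ k ih =>
    rw [Function.iterate_succ_apply', ih]
    funext i
    have hiR : i.val % R < R := Nat.mod_lt _ hR0
    have hkR : k % R < R := Nat.mod_lt _ hR0
    unfold twist
    split
    · next h =>
      have key := psi_master R hR4 hRe (k % R) hkR (i.val % R) hiR
      rw [Nat.mod_add_mod, Nat.mod_add_mod] at key
      simp only [Nat.zero_mod] at key ⊢
      rw [key]
    · next h =>
      have hival : i.val = n - 1 := by have := i.isLt; omega
      have hnm : (n - 1) % R = R - 1 := by
        obtain ⟨c, hc⟩ := Nat.exists_eq_add_of_le hQ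
        have hnc : n = R + c * R := by rw [hn, hc]; ring
        have hsub : n - 1 = R - 1 + c * R := by omega
        rw [hsub, Nat.add_mul_mod_self_right]
        exact Nat.mod_eq_of_lt (by omega)
      have key := psi_master R hR4 hRe (k % R) hkR (R - 1) (by omega)
      rw [Nat.mod_add_mod] at key
      have hRR : (R - 1 + 1) % R = 0 := by
        rw [Nat.sub_add_cancel (by omega), Nat.mod_self]
      rw [hRR] at key
      simp only [Nat.zero_mod, hival, hnm]
      rw [key]; ring
end

lemma exists_four (n m R Q t : ℕ) (hR4 : 4 ≤ R) (hRe : Even R) (hQ : 1 ≤ Q) (ht : 1 ≤ t)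
    (hn : n = Q * R) (hm : m = t * R) :
    ∃ x : Fin n → ℤ, (twist n)^[m] x = x ∧ (colors n m x).encard = 4 := by
  have hR0 : 0 < R := by omega
  have hn4 : 4 ≤ n := by calc 4 ≤ R := hR4
                          _ = 1 * R := (one_mul R).symm
                          _ ≤ Q * R := Nat.mul_le_mul_right _ hQ
                          _ = n := hn.symm
  have hm4 : 4 ≤ m := by calc 4 ≤ R := hR4
                          _ = 1 * R := (one_mul R).symm
                          _ ≤ t * R := Nat.mul_le_mul_right _ ht
                          _ = m := hm.symm
  refine ⟨fun i : Fin n => psi R 0 (i.val % R), ?_, ?_⟩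
  · rw [orbit_formula n R Q hR4 hRe hQ hn m]
    have : m % R = 0 := by rw [hm, Nat.mul_mod_left]
    rw [this]
  · have hcol : colors n m (fun i : Fin n => psi R 0 (i.val % R)) = {-2, -1, 0, 1} := by
      ext c
      constructor
      · rintro ⟨k, hk, i, rfl⟩
        rw [orbit_formula n R Q hR4 hRe hQ hn k]
        have := psi_values R (k % R) (i.val % R)
        simp only [Set.mem_insert_iff, Set.mem_singleton_iff]
        tauto
      · intro hc
        simp only [Set.mem_insert_iff, Set.mem_singleton_iff] at hc
        rcases hc with rfl | rfl | rfl | rfl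
        · -- -2 : k = 2, i = 1
          refine ⟨2, by omega, ⟨1, by omega⟩, ?_⟩
          rw [orbit_formula n R Q hR4 hRe hQ hn 2]
          simp only
          rw [Nat.mod_eq_of_lt (by omega : 2 < R), Nat.mod_eq_of_lt (by omega : 1 < R), psi_two]
          rw [if_neg (by omega)]
        · -- -1 : k = 1, i = 0
          refine ⟨1, by omega, ⟨0, by omega⟩, ?_⟩
          rw [orbit_formula n R Q hR4 hRe hQ hn 1]
          simp only
          rw [Nat.mod_eq_of_lt (by omega : 1 < R), Nat.zero_mod, psi_one_zero]
        · -- 0 : k = 0, i = 0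
          refine ⟨0, by omega, ⟨0, by omega⟩, ?_⟩
          rw [orbit_formula n R Q hR4 hRe hQ hn 0]
          simp only
          simp only [Nat.zero_mod]
          exact psi_zero_zero R
        · -- 1 : k = 0, i = 1
          refine ⟨0, by omega, ⟨1, by omega⟩, ?_⟩
          rw [orbit_formula n R Q hR4 hRe hQ hn 0]
          simp only
          rw [Nat.zero_mod, Nat.mod_eq_of_lt (by omega : 1 < R), psi_zero]
          rw [if_pos (by omega)]
    rw [hcol]
    rw [Set.encard_insert_of_notMem (by norm_num),
        Set.encard_insert_of_notMem (by norm_num),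
        Set.encard_insert_of_notMem (by norm_num),
        Set.encard_singleton]
    rfl

lemma twist_shift (n : ℕ) (y : Fin n → ℤ) (e : ℤ) :
    twist n (fun i => y i + e) = fun i => twist n y i + e := by
  funext i; unfold twist; split <;> ring

lemma ent_zero (n : ℕ) (hn0 : 0 < n) (x : Fin n → ℤ) (j : ℕ) (hj : j < n) :
    x ⟨j, hj⟩ = ent n hn0 x 0 j := by
  simp [ent, Nat.mod_eq_of_lt hj]

lemma r2_trivial (Q P : ℕ) (hQ : 1 ≤ Q) (hPQ : Q ≤ P) (hgcd : Nat.gcd P Q = 1)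
    (n m : ℕ) (hn : n = 2*Q) (hm : m = 2*P) (x : Fin n → ℤ)
    (hfix : (twist n)^[m] x = x) : (colors n m x).encard ≤ 1 := by
  have hn0 : 0 < n := by omega
  have hm0 : 0 < m := by omega
  have hmn : n ≤ m := by omega
  set E := ent n hn0 x with hE
  set c : ℕ → ℤ := fun k => E k 0 - E k (n-1) with hc
  have c_succ : ∀ k, c (k+1) = E k 0 - E k 1 := by
    intro k
    have h1 := ent_succ_lt n hn0 x k 0 (by omega)
    have h2 := ent_succ_last n hn0 x k
    norm_num at h1
    simp only [hc, ← hE] at *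
    omega
  have ent_per : ∀ k i, E (k+m) i = E k i := by
    intro k i
    simp only [hE, ent]
    rw [Function.iterate_add_apply, hfix]
  have ent_m : ∀ i, E m i = E 0 i := by
    intro i
    have := ent_per 0 i
    simpa using this
  have descent : ∀ j k, j ≤ n - 2 →
      E (k+1+j) (n-2-j) - E (k+1+j) (n-2-j+1) = (-1)^j * c k := by
    intro j
    induction j with
    | zero =>
      intro k _
      have h1 := ent_succ_lt n hn0 x k (n-2) (by omega)
      have h2 := ent_succ_last n hn0 x k
      have e1 : n - 2 + 1 = n - 1 := by omega
      rw [e1] at h1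
      simp only [← hE] at h1 h2
      simp only [hc, ← hE, pow_zero, one_mul, Nat.add_zero, Nat.sub_zero, e1]
      omega
    | succ j ih =>
      intro k hj
      have ihk := ih k (by omega)
      have h1 := ent_succ_lt n hn0 x (k+1+j) (n-2-(j+1)) (by omega)
      have h2 := ent_succ_lt n hn0 x (k+1+j) (n-2-(j+1)+1) (by omega)
      have e1 : n-2-(j+1)+1 = n-2-j := by omega
      rw [e1] at h1 h2
      rw [show k+1+(j+1) = (k+1+j)+1 from by omega, e1]
      simp only [← hE] at h1 h2
      have hlin : E ((k+1+j)+1) (n-2-(j+1)) - E ((k+1+j)+1) (n-2-j)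
          = -(E (k+1+j) (n-2-j) - E (k+1+j) (n-2-j+1)) := by omega
      rw [hlin, ihk, pow_succ]
      ring
  have c_per_m : ∀ k, c (k+m) = c k := by
    intro k; simp only [hc, ent_per]
  have c_per_n : ∀ k, c (k+n) = c k := by
    intro k
    have hd := descent (n-2) k (le_refl _)
    have e0 : n-2-(n-2) = 0 := by omega
    have e1 : k+1+(n-2) = k + n - 1 := by omega
    have epow : (-1:ℤ)^(n-2) = 1 := Even.neg_one_pow ⟨Q-1, by omega⟩
    rw [e0, e1, epow, one_mul] at hd
    have csucc := c_succ (k + n - 1)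
    rw [show k + n - 1 + 1 = k + n from by omega] at csucc
    norm_num at hd
    omega
  have per_gen : ∀ (a : ℕ), (∀ k, c (k+a) = c k) → ∀ t k, c (k + t*a) = c k := by
    intro a ha t
    induction t with
    | zero => simp
    | succ t ih =>
      intro k
      rw [show k + (t+1)*a = (k + t*a) + a from by ring, ha, ih]
  have bez : ∃ A B : ℕ, A * n = B * m + 2 := by
    have h1 : (1:ℤ) = P * Nat.gcdA P Q + Q * Nat.gcdB P Q := by
      have h := Nat.gcd_eq_gcd_ab P Q
      rw [hgcd] at h; exact_mod_cast h
    set s := Nat.gcdA P Q with hs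
    set u := Nat.gcdB P Q with hu
    set w : ℤ := |s| + |u| + 1 with hw
    have hP1 : (1:ℤ) ≤ (P:ℤ) := by exact_mod_cast hPQ.trans' hQ
    have hQ1 : (1:ℤ) ≤ (Q:ℤ) := by exact_mod_cast hQ
    have hA : 0 ≤ u + w * P := by nlinarith [abs_nonneg s, abs_nonneg u, neg_abs_le u]
    have hB : 0 ≤ -s + w * Q := by nlinarith [abs_nonneg s, abs_nonneg u, neg_abs_le s, le_abs_self s]
    have hz : (u + w*P) * n = (-s + w*Q) * m + 2 := by
      have hnz : (n:ℤ) = 2*Q := by exact_mod_cast hn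
      have hmz : (m:ℤ) = 2*P := by exact_mod_cast hm
      rw [hnz, hmz]
      linear_combination (-2) * h1
    refine ⟨(u + w*P).toNat, (-s + w*Q).toNat, ?_⟩
    have hcast : (((u + w*P).toNat * n : ℕ) : ℤ) = (((-s + w*Q).toNat * m + 2 : ℕ) : ℤ) := by
      push_cast
      rw [Int.toNat_of_nonneg hA, Int.toNat_of_nonneg hB]
      linarith [hz]
    exact_mod_cast hcast
  have c_per_2 : ∀ k, c (k+2) = c k := by
    obtain ⟨A, B, hAB⟩ := bez
    intro k
    have h1 : c (k + 2 + B*m) = c (k+2) := per_gen m c_per_m B (k+2)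
    have h2 : c (k + A*n) = c k := per_gen n c_per_n A k
    rw [show k + 2 + B*m = k + A*n from by omega] at h1
    omega
  have c_eval : ∀ k', c k' = if Even k' then c 0 else c 1 := by
    intro k'
    rcases Nat.even_or_odd k' with he | ho
    · rw [if_pos he]
      obtain ⟨a, ha⟩ := he
      have := per_gen 2 c_per_2 a 0
      rw [show k' = 0 + a*2 from by omega]
      simpa using this
    · rw [if_neg (by simp [Nat.odd_iff.mp ho, Nat.even_iff])]
      obtain ⟨a, ha⟩ := ho
      have := per_gen 2 c_per_2 a 1
      rw [show k' = 1 + a*2 from by omega]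
      simpa using this
  have D0 : ∀ i, i ≤ n-2 → E 0 i - E 0 (i+1) = if Even i then c 1 else -(c 0) := by
    intro i hi
    have hd := descent (n-2-i) (m - (n-1-i)) (by omega)
    have e1 : m - (n-1-i) + 1 + (n-2-i) = m := by omega
    have e2 : n-2-(n-2-i) = i := by omega
    have e3 : n-2-(n-2-i)+1 = i+1 := by omega
    rw [e1, e2, ent_m, ent_m] at hd
    rcases Nat.even_or_odd i with he | ho
    · rw [if_pos he]
      have hi2 : i % 2 = 0 := Nat.even_iff.mp he
      have hppow : (-1:ℤ)^(n-2-i) = 1 := Even.neg_one_pow (by rw [Nat.even_iff]; omega)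
      have hco : ¬ Even (m - (n-1-i)) := by rw [Nat.even_iff]; omega
      rw [c_eval (m - (n-1-i)), if_neg hco, hppow, one_mul] at hd
      exact hd
    · rw [if_neg (by simp [Nat.odd_iff.mp ho, Nat.even_iff])]
      have hi2 : i % 2 = 1 := Nat.odd_iff.mp ho
      have hppow : (-1:ℤ)^(n-2-i) = -1 := Odd.neg_one_pow (by rw [Nat.odd_iff]; omega)
      have hco : Even (m - (n-1-i)) := by rw [Nat.even_iff]; omega
      rw [c_eval (m - (n-1-i)), if_pos hco, hppow] at hd
      linarith [hd]
  have hwalk : ∀ s, 2*s ≤ n-2 → E 0 (2*s) = E 0 0 + s*(c 0 - c 1) := by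
    intro s
    induction s with
    | zero => intro _; simp
    | succ s ih =>
      intro hs
      have h1 := D0 (2*s) (by omega)
      have h2 := D0 (2*s+1) (by omega)
      rw [if_pos ⟨s, by omega⟩] at h1
      rw [if_neg (by simp [Nat.even_iff, Nat.add_mod, Nat.mul_mod])] at h2
      have ihs := ih (by omega)
      rw [show 2*(s+1) = 2*s+1+1 from by ring]
      have hlin : E 0 (2*s+1+1) = E 0 (2*s) - c 1 + c 0 := by omega
      rw [hlin, ihs]
      push_cast
      ring
  have hc01 : c 0 = c 1 := by
    have hw := hwalk (Q-1) (by omega)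
    have hD := D0 (n-2) (by omega)
    rw [if_pos ⟨Q-1, by omega⟩] at hD
    rw [show n-2+1 = n-1 from by omega] at hD
    rw [show 2*(Q-1) = n-2 from by omega] at hw
    have hcc : c 0 = E 0 0 - E 0 (n-1) := rfl
    have hQcast : ((Q:ℤ)) = ((Q-1:ℕ):ℤ) + 1 := by push_cast [hQ]; omega
    have hQX : (Q:ℤ) * (c 0 - c 1) = 0 := by
      rw [hQcast]
      nlinarith [hw, hD, hcc]
    have hQne : (Q:ℤ) ≠ 0 := by exact_mod_cast (by omega : Q ≠ 0)
    have := mul_eq_zero.mp hQX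
    rcases this with h | h
    · exact absurd h hQne
    · linarith
  have hx_par : ∀ i, i < n → E 0 i = E 0 0 - (if Even i then 0 else c 0) := by
    intro i
    induction i with
    | zero => intro _; simp
    | succ i ih =>
      intro hi
      have hD := D0 i (by omega)
      have ihs := ih (by omega)
      rcases Nat.even_or_odd i with he | ho
      · have h2 : i % 2 = 0 := Nat.even_iff.mp he
        rw [if_pos he] at hD ihs
        rw [if_neg (by simp only [Nat.even_iff]; omega)]
        omega
      · have h2 : i % 2 = 1 := Nat.odd_iff.mp ho
        rw [if_neg (by simp only [Nat.even_iff]; omega)] at hD ihs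
        rw [if_pos (by simp only [Nat.even_iff]; omega)]
        omega
  have hTx : twist n x = fun i : Fin n => x i + c 0 := by
    funext i
    unfold twist
    split
    · next h =>
      rw [ent_zero n hn0 x 0 (by omega), ent_zero n hn0 x (i.val+1) h,
          show x i = x ⟨i.val, i.isLt⟩ from by congr,
          ent_zero n hn0 x i.val i.isLt]
      simp only [← hE]
      rw [hx_par 0 (by omega), hx_par (i.val+1) h, hx_par i.val i.isLt]
      rcases Nat.even_or_odd i.val with he | ho
      · have h2 : i.val % 2 = 0 := Nat.even_iff.mp he
        rw [if_pos (by decide : Even 0), if_neg (by simp only [Nat.even_iff]; omega),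
            if_pos he]
        ring
      · have h2 : i.val % 2 = 1 := Nat.odd_iff.mp ho
        rw [if_pos (by decide : Even 0),
            if_pos (by simp only [Nat.even_iff]; omega),
            if_neg (by simp only [Nat.even_iff]; omega)]
        ring
    · next h =>
      have hival : i.val = n - 1 := by have := i.isLt; omega
      rw [ent_zero n hn0 x 0 (by omega),
          show x i = x ⟨i.val, i.isLt⟩ from by congr,
          ent_zero n hn0 x i.val i.isLt]
      simp only [← hE]
      rw [hx_par 0 (by omega), hx_par i.val i.isLt]
      rw [if_pos (by decide : Even 0),
          if_neg (by simp only [Nat.even_iff]; omega)]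
      ring
  have hiter : ∀ k, (twist n)^[k] x = fun i => x i + k * c 0 := by
    intro k
    induction k with
    | zero => simp
    | succ k ih =>
      rw [Function.iterate_succ_apply', ih,
          show (fun i => x i + (k:ℤ) * c 0) = (fun i => x i + (k:ℤ) * c 0) from rfl]
      rw [twist_shift, hTx]
      funext i
      push_cast
      ring
  have hczero : c 0 = 0 := by
    have := congrFun hfix ⟨0, hn0⟩
    rw [hiter m] at this
    simp only at this
    have hmz : (m:ℤ) * c 0 = 0 := by linarith
    have hmne : (m:ℤ) ≠ 0 := by exact_mod_cast (by omega : m ≠ 0)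
    rcases mul_eq_zero.mp hmz with h | h
    · exact absurd h hmne
    · exact h
  have hconst : (twist n)^[0] x = fun _ : Fin n => E 0 0 := by
    funext j
    simp only [Function.iterate_zero, id_eq]
    rw [show x j = x ⟨j.val, j.isLt⟩ from by congr, ent_zero n hn0 x j.val j.isLt]
    simp only [← hE]
    rw [hx_par j.val j.isLt, hczero]
    split <;> ring
  have hsub := colors_sub_of_const n m hm0 x hfix 0 (E 0 0) hconst
  calc (colors n m x).encard ≤ ({E 0 0} : Set ℤ).encard := Set.encard_mono hsub
    _ = 1 := Set.encard_singleton _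


theorem stmt_0 (p q r : ℤ) (hp : p ≠ 0) (hgcd : Int.gcd p q = 1)
    (hq1 : 1 ≤ q) (hqp : q ≤ |p|) (hr2 : 2 ≤ r) (hre : Even r)
    (n m : ℕ) (hn : (n : ℤ) = q * r) (hm : (m : ℤ) = |p| * r)
    (hex : ∃ x : Fin n → ℤ, (twist n)^[m] x = x ∧ 2 ≤ (colors n m x).encard) :
    (∃ x : Fin n → ℤ, (twist n)^[m] x = x ∧ (colors n m x).encard = 4) ∧
    (∀ x : Fin n → ℤ, (twist n)^[m] x = x → 2 ≤ (colors n m x).encard →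
      4 ≤ (colors n m x).encard) := by
  set Q := q.toNat with hQdef
  set R := r.toNat with hRdef
  set P := p.natAbs with hPdef
  have hQ : (Q:ℤ) = q := Int.toNat_of_nonneg (by omega)
  have hR : (R:ℤ) = r := Int.toNat_of_nonneg (by omega)
  have hP : (P:ℤ) = |p| := (Int.abs_eq_natAbs p).symm
  have hnQR : n = Q * R := by
    have h : (n:ℤ) = (Q:ℤ) * (R:ℤ) := by rw [hQ, hR]; exact hn
    exact_mod_cast h
  have hmPR : m = P * R := by
    have h : (m:ℤ) = (P:ℤ) * (R:ℤ) := by rw [hP, hR]; exact hm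
    exact_mod_cast h
  have hQ1 : 1 ≤ Q := by omega
  have hR2 : 2 ≤ R := by omega
  have hP1 : 1 ≤ P := by
    have : p.natAbs ≠ 0 := Int.natAbs_ne_zero.mpr hp
    omega
  have hPQ : Q ≤ P := by
    have : (Q:ℤ) ≤ (P:ℤ) := by rw [hQ, hP]; exact hqp
    exact_mod_cast this
  have hRE : Even R := by
    rcases hre with ⟨t, ht⟩
    exact ⟨t.toNat, by omega⟩
  have hgcdPQ : Nat.gcd P Q = 1 := by
    have hQabs : q.natAbs = Q := by omega
    rw [Int.gcd, hQabs] at hgcd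
    exact hgcd
  have hn0 : 0 < n := by nlinarith
  have hm0 : 0 < m := by nlinarith
  constructor
  · rcases Nat.lt_or_ge R 4 with h4 | h4
    · have hR2' : R = 2 := by
        rcases hRE with ⟨t, ht⟩
        omega
      exfalso
      obtain ⟨x, hfx, h2x⟩ := hex
      have h1 := r2_trivial Q P hQ1 hPQ hgcdPQ n m
        (by rw [hnQR, hR2']; ring) (by rw [hmPR, hR2']; ring) x hfx
      have := le_trans h2x h1
      norm_num at this
    · exact exists_four n m R Q P h4 hRE hQ1 hP1 hnQR hmPR
  · intro x hfx h2
    exact lower_bound n m hn0 hm0 x hfx h2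
end

section
/- Let p, q, r be integers with p ≠ 0, gcd(p, q) = 1, |p| ≥ q ≥ 1, r ≥ 2 and r even, and set n = qr, m = |p|·r. If there exists x ∈ ℤ^n with T_n^m(x) = x such that C(x) has at least two elements, then there exists x ∈ ℤ^n with T_n^m(x) = x such that C(x) = {0, 1, 2, 3}. -/
open Fin.NatCast

variable {n : ℕ}

lemma twist_lt [NeZero n] (x : Fin n → ℤ) (i : Fin n) (h : (i:ℕ)+1 < n) :
    twist n x i = 2 * x 0 - x (((i:ℕ)+1 : ℕ) : Fin n) := by
  have h0 : (⟨0, i.pos⟩ : Fin n) = 0 := by ext; simp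
  have h1 : (⟨(i:ℕ)+1, h⟩ : Fin n) = (((i:ℕ)+1 : ℕ) : Fin n) := by
    ext; rw [Fin.val_natCast]; exact (Nat.mod_eq_of_lt h).symm
  simp only [twist, dif_pos h, h0, h1]

lemma twist_last [NeZero n] (x : Fin n → ℤ) (i : Fin n) (h : ¬ ((i:ℕ)+1 < n)) :
    twist n x i = x 0 := by
  have h0 : (⟨0, i.pos⟩ : Fin n) = 0 := by ext; simp
  simp only [twist, dif_neg h, h0]

lemma twistA [NeZero n] (x : Fin n → ℤ) :
    ∀ k, k ≤ n → ∀ i : Fin n,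
      (twist n)^[k] x i
        = 2 * (∑ j ∈ Finset.range k, (-1:ℤ)^j * x (j : Fin n))
          + (-1:ℤ)^k * x (((i:ℕ) + k : ℕ) : Fin n) := by
  intro k
  induction k with
  | zero => intro _ i; simp [Fin.cast_val_eq_self]
  | succ k ih =>
    intro hk i
    have hkn : k < n := hk
    have hIH := ih (le_of_lt hkn)
    rw [Function.iterate_succ_apply']
    have hx0 : (twist n)^[k] x 0
        = 2 * (∑ j ∈ Finset.range k, (-1:ℤ)^j * x (j : Fin n)) + (-1:ℤ)^k * x (k : Fin n) := by
      have := hIH 0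
      simpa using this
    have hsum : (∑ j ∈ Finset.range (k+1), (-1:ℤ)^j * x (j : Fin n))
        = (∑ j ∈ Finset.range k, (-1:ℤ)^j * x (j : Fin n)) + (-1:ℤ)^k * x (k : Fin n) :=
      Finset.sum_range_succ _ _
    by_cases h : (i:ℕ)+1 < n
    · rw [twist_lt _ i h, hx0]
      have h2 := hIH (((i:ℕ)+1 : ℕ) : Fin n)
      have hval : (((((i:ℕ)+1 : ℕ) : Fin n) : ℕ) + k : ℕ) = ((i:ℕ)+1+k : ℕ) := by
        rw [Fin.val_natCast, Nat.mod_eq_of_lt h]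
      rw [h2, hval]
      have hidx : (((i:ℕ)+1+k : ℕ) : Fin n) = (((i:ℕ)+(k+1) : ℕ) : Fin n) := by
        congr 1; omega
      rw [hidx, hsum]
      ring
    · rw [twist_last _ i h, hx0, hsum]
      have hi : (i:ℕ) = n - 1 := by omega
      have hidx : (((i:ℕ)+(k+1) : ℕ) : Fin n) = (k : Fin n) := by
        have : (i:ℕ)+(k+1) = n + k := by omega
        rw [this]; push_cast [Fin.natCast_self]; simp
      rw [hidx]
      ring

lemma twist_add_const [NeZero n] (y : Fin n → ℤ) (c : ℤ) :
    twist n (fun i => y i + c) = fun i => twist n y i + c := by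
  funext i
  by_cases h : (i:ℕ)+1 < n
  · rw [twist_lt _ i h]
    have := twist_lt y i h
    rw [this]; ring
  · rw [twist_last _ i h, twist_last y i h]

lemma twist_iter_add_const [NeZero n] (y : Fin n → ℤ) (c : ℤ) (k : ℕ) :
    (twist n)^[k] (fun i => y i + c) = fun i => (twist n)^[k] y i + c := by
  induction k with
  | zero => simp
  | succ k ih =>
    rw [Function.iterate_succ_apply', ih, twist_add_const]
    funext i
    rw [Function.iterate_succ_apply']

lemma twist_iter_self [NeZero n] (hne : Even n) (x : Fin n → ℤ) :
    (twist n)^[n] x = fun i => x i + 2 * (∑ j ∈ Finset.range n, (-1:ℤ)^j * x (j : Fin n)) := by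
  funext i
  rw [twistA x n le_rfl i]
  have h1 : ((((i:ℕ) + n : ℕ)) : Fin n) = i := by
    push_cast [Fin.natCast_self]
    simp [Fin.cast_val_eq_self]
  rw [h1, hne.neg_one_pow]
  ring

lemma twist_iter_mul [NeZero n] (hne : Even n) (x : Fin n → ℤ) (Q : ℕ) :
    (twist n)^[n*Q] x = fun i => x i + 2 * Q * (∑ j ∈ Finset.range n, (-1:ℤ)^j * x (j : Fin n)) := by
  induction Q with
  | zero => simp
  | succ Q ih =>
    have : n*(Q+1) = n*Q + n := by ring
    rw [this, Function.iterate_add_apply, twist_iter_self hne, twist_iter_add_const, ih]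
    funext i; push_cast; ring

lemma twist_iter_decomp [NeZero n] (hne : Even n) (x : Fin n → ℤ) (k : ℕ) :
    (twist n)^[k] x
      = fun i => (twist n)^[k % n] x i
          + 2 * ((k / n : ℕ) : ℤ) * (∑ j ∈ Finset.range n, (-1:ℤ)^j * x (j : Fin n)) := by
  conv_lhs => rw [show k = k % n + n * (k / n) by have := Nat.div_add_mod k n; omega]
  rw [Function.iterate_add_apply, twist_iter_mul hne, twist_iter_add_const]

lemma branch2 (n m : ℕ) (hn2 : 2 ≤ n) (hm1 : 1 ≤ m)
    (n2 m2 : ℕ) (hn' : n = 2*n2) (hm' : m = 2*m2)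
    (hB : ∃ t : ℕ, (t * m) % n = 2 % n)
    (x : Fin n → ℤ) (hfix : (twist n)^[m] x = x) :
    ∀ i : Fin n, x i = x ⟨0, by omega⟩ := by
  haveI : NeZero n := ⟨by omega⟩
  have heN : Even n := ⟨n2, by omega⟩
  set S : ℤ := ∑ j ∈ Finset.range n, (-1:ℤ)^j * x (j : Fin n) with hS
  set u : ℕ := m % n with hu
  set Q : ℕ := m / n with hQ
  have hun : u < n := Nat.mod_lt _ (by omega)
  have hu2 : u = 2 * (m2 % n2) := by
    rw [hu, hn', hm']; exact Nat.mul_mod_mul_left 2 m2 n2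
  set Su : ℤ := ∑ j ∈ Finset.range u, (-1:ℤ)^j * x (j : Fin n) with hSu
  set C : ℤ := 2 * Su + 2 * (Q:ℤ) * S with hC
  -- step: x i = C + x (i + u)
  have hstep : ∀ i : Fin n, x i = C + x (((i:ℕ) + u : ℕ) : Fin n) := by
    intro i
    have h1 := congrFun (twist_iter_decomp heN x m) i
    rw [hfix] at h1
    have h2 := twistA x u (le_of_lt hun) i
    have hpow : (-1:ℤ)^u = 1 := (Even.neg_one_pow ⟨m2 % n2, by omega⟩)
    rw [h2, hpow] at h1
    rw [h1]; ring
  -- iterate the step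
  have hiter : ∀ t : ℕ, ∀ i : Fin n, x (((i:ℕ) + t*u : ℕ) : Fin n) = x i - t*C := by
    intro t
    induction t with
    | zero => intro i; simp [Fin.cast_val_eq_self]
    | succ t ih =>
      intro i
      have hj := hstep ((((i:ℕ) + t*u : ℕ)) : Fin n)
      have hidx : (((((((i:ℕ) + t*u : ℕ)) : Fin n) : ℕ) + u : ℕ) : Fin n)
          = (((i:ℕ) + (t+1)*u : ℕ) : Fin n) := by
        ext
        rw [Fin.val_natCast, Fin.val_natCast, Fin.val_natCast, Nat.mod_add_mod]
        congr 1; ring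
      rw [hidx] at hj
      have := ih i
      rw [this] at hj
      push_cast
      push_cast at hj
      linarith
  -- t = n gives C = 0
  have hC0 : C = 0 := by
    have h1 := hiter n (0 : Fin n)
    have hidx : (((((0 : Fin n)):ℕ) + n*u : ℕ) : Fin n) = (0 : Fin n) := by
      ext
      rw [Fin.val_natCast]
      simp [Nat.mul_mod_right]
    rw [hidx] at h1
    have hn0 : (n:ℤ) ≠ 0 := by exact_mod_cast (by omega : n ≠ 0)
    have : (n:ℤ) * C = 0 := by linarith
    rcases mul_eq_zero.mp this with h | h
    · exact absurd h hn0
    · exact h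
  -- 2-periodicity
  have h2per : ∀ j : ℕ, x ((j + 2 : ℕ) : Fin n) = x ((j : ℕ) : Fin n) := by
    obtain ⟨t, ht⟩ := hB
    intro j
    have h1 := hiter t ((j : ℕ) : Fin n)
    rw [hC0] at h1
    have hmod : (t * u) % n = 2 % n := by
      rw [hu, Nat.mul_mod, Nat.mod_mod_of_dvd, ← Nat.mul_mod, ht]
      exact dvd_refl n
    have hidx : ((((( j : ℕ) : Fin n) : ℕ) + t*u : ℕ) : Fin n) = ((j + 2 : ℕ) : Fin n) := by
      ext
      rw [Fin.val_natCast, Fin.val_natCast, Fin.val_natCast, Nat.mod_add_mod, Nat.add_mod,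
        hmod, ← Nat.add_mod]
    rw [hidx] at h1
    simpa using h1
  set a : ℤ := x ((0 : ℕ) : Fin n) with ha
  set d : ℤ := x ((1 : ℕ) : Fin n) with hd
  have key : ∀ j : ℕ, x ((j : ℕ) : Fin n) = if Even j then a else d := by
    intro j
    induction j using Nat.strong_induction_on with
    | _ j ih =>
      match j with
      | 0 => simp [ha]
      | 1 => simp [hd, Nat.even_add_one]
      | (t+2) =>
        rw [h2per t, ih t (by omega)]
        congr 1
        simp [Nat.even_add_one, parity_simps]
  -- alternating sums
  have altsum : ∀ t : ℕ, ∑ j ∈ Finset.range (2*t), (-1:ℤ)^j * x (j : Fin n) = t * (a - d) := by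
    intro t
    induction t with
    | zero => simp
    | succ t ih =>
      have h1 : 2*(t+1) = (2*t + 1) + 1 := by ring
      rw [h1, Finset.sum_range_succ, Finset.sum_range_succ, ih]
      rw [key (2*t), key (2*t+1)]
      have he : Even (2*t) := ⟨t, by ring⟩
      have ho : ¬ Even (2*t+1) := by simp [Nat.even_add_one, he]
      have hodd : Odd (2*t+1) := ⟨t, by ring⟩
      rw [if_pos he, if_neg ho, he.neg_one_pow, hodd.neg_one_pow]
      push_cast; ring
  -- evaluate C and conclude a = d
  have hSval : S = (n2:ℤ) * (a - d) := by
    have h := altsum n2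
    rw [← hn'] at h
    rw [hS, h]
  have hSuval : Su = ((m2 % n2 : ℕ):ℤ) * (a - d) := by
    have h := altsum (m2 % n2)
    rw [← hu2] at h
    rw [hSu, h]
  have had : a = d := by
    have hdm : n * Q + u = m := Nat.div_add_mod m n
    have hmz : (m:ℤ) ≠ 0 := by exact_mod_cast (by omega : m ≠ 0)
    have hmQ : m = 2*n2*Q + 2*(m2 % n2) := by
      rw [← hdm, hn', hu2]
    have hcast : (m:ℤ) = 2*(n2:ℤ)*(Q:ℤ) + 2*((m2 % n2 : ℕ) : ℤ) := by
      exact_mod_cast hmQ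
    have hCm : C = (a - d) * (m:ℤ) := by
      rw [hC, hSval, hSuval, hcast]; ring
    rw [hC0] at hCm
    rcases mul_eq_zero.mp hCm.symm with h | h
    · linarith
    · exact absurd h hmz
  -- conclude constant
  intro i
  have h0 : (⟨0, by omega⟩ : Fin n) = ((0 : ℕ) : Fin n) := by
    ext; rw [Fin.val_natCast]; simp
  have h1 : x i = x (((i:ℕ) : ℕ) : Fin n) := by rw [Fin.cast_val_eq_self]
  rw [h0, h1, key (i:ℕ)]
  split
  · exact ha
  · exact had ▸ ha


/-- the pattern vector: 1 at indices ≡ 0 or R-1 mod R, else 0. -/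
def xfun (n R : ℕ) : Fin n → ℤ :=
  fun i => if (i:ℕ) % R = 0 ∨ (i:ℕ) % R = R - 1 then 1 else 0

def gfun (R : ℕ) (j : ℕ) : ℤ :=
  (-1:ℤ)^j * (if j % R = 0 ∨ j % R = R - 1 then 1 else 0)

section b4
variable {n m R : ℕ}

lemma xfun_natCast [NeZero n] (hRn : R ∣ n) (j : ℕ) :
    xfun n R ((j : ℕ) : Fin n) = (if j % R = 0 ∨ j % R = R - 1 then 1 else 0) := by
  unfold xfun
  simp only [Fin.val_natCast, Nat.mod_mod_of_dvd j hRn]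

lemma gfun_eq [NeZero n] (hRn : R ∣ n) (j : ℕ) :
    (-1:ℤ)^j * xfun n R ((j : ℕ) : Fin n) = gfun R j := by
  rw [xfun_natCast hRn, gfun]

lemma gfun_per (hRe : Even R) (w : ℕ) : gfun R (w + R) = gfun R w := by
  unfold gfun
  rw [pow_add, hRe.neg_one_pow, Nat.add_mod_right, mul_one]

lemma gfun_shift (hRe : Even R) (v w : ℕ) : gfun R (w + v*R) = gfun R w := by
  induction v with
  | zero => simp
  | succ v ih =>
    rw [show w + (v+1)*R = (w + v*R) + R by ring, gfun_per hRe, ih]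

lemma gfun_sum_lt (hR4 : 4 ≤ R) (w : ℕ) (hw : w < R) (hw0 : w ≠ 0) :
    ∑ t ∈ Finset.range w, gfun R t = 1 := by
  rw [Finset.sum_eq_single_of_mem 0 (Finset.mem_range.mpr (by omega))]
  · unfold gfun; simp
  · intro b hb hb0
    rw [Finset.mem_range] at hb
    unfold gfun
    rw [Nat.mod_eq_of_lt (by omega), if_neg (by omega), mul_zero]

lemma gfun_sum (hR4 : 4 ≤ R) (hRe : Even R) : ∑ t ∈ Finset.range R, gfun R t = 0 := by
  obtain ⟨R', rfl⟩ : ∃ R', R = R' + 1 := ⟨R-1, by omega⟩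
  rw [Finset.sum_range_succ]
  have h1 : ∑ t ∈ Finset.range R', gfun (R'+1) t = 1 :=
    gfun_sum_lt hR4 R' (by omega) (by omega)
  have h2 : gfun (R'+1) R' = -1 := by
    unfold gfun
    have hodd : Odd R' := Nat.odd_iff.mpr (by
      have := Nat.even_iff.mp hRe; omega)
    rw [Nat.mod_eq_of_lt (by omega), if_pos (by omega), hodd.neg_one_pow]
    ring
  rw [h1, h2]; ring

lemma gfun_summul (hR4 : 4 ≤ R) (hRe : Even R) (v : ℕ) :
    ∑ j ∈ Finset.range (v*R), gfun R j = 0 := by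
  induction v with
  | zero => simp
  | succ v ih =>
    rw [show (v+1)*R = v*R + R by ring, Finset.sum_range_add, ih]
    have : ∑ j ∈ Finset.range R, gfun R (v*R + j) = ∑ j ∈ Finset.range R, gfun R j := by
      refine Finset.sum_congr rfl fun j _ => ?_
      rw [Nat.add_comm, gfun_shift hRe]
    rw [this, gfun_sum hR4 hRe]; ring

lemma xfun_sum_dvd [NeZero n] (hR4 : 4 ≤ R) (hRe : Even R) (hRn : R ∣ n)
    (w : ℕ) (hw : R ∣ w) :
    ∑ j ∈ Finset.range w, (-1:ℤ)^j * xfun n R ((j:ℕ) : Fin n) = 0 := by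
  rw [Finset.sum_congr rfl (fun j _ => gfun_eq hRn j), ← Nat.div_mul_cancel hw,
    gfun_summul hR4 hRe]

lemma branch4 (hR4 : 4 ≤ R) (hRe : Even R) (hRn : R ∣ n) (hRm : R ∣ m)
    (hn0 : 0 < n) (hm4 : 4 ≤ m) :
    (twist n)^[m] (xfun n R) = xfun n R := by
  haveI : NeZero n := ⟨by omega⟩
  have heN : Even n := (even_iff_two_dvd).mpr (dvd_trans hRe.two_dvd hRn)
  set x : Fin n → ℤ := xfun n R with hx
  have hSx : ∑ j ∈ Finset.range n, (-1:ℤ)^j * x ((j:ℕ) : Fin n) = 0 :=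
    xfun_sum_dvd hR4 hRe hRn n hRn
  have hfixu : ∀ u : ℕ, u < n → R ∣ u → (twist n)^[u] x = x := by
    intro u hun hRu
    funext i
    rw [twistA x u (le_of_lt hun) i, xfun_sum_dvd hR4 hRe hRn u hRu]
    obtain ⟨c, hc⟩ := hRu
    obtain ⟨e, he⟩ := hRe
    have hpow : (-1:ℤ)^u = 1 := Even.neg_one_pow ⟨e*c, by rw [hc, he]; ring⟩
    have hxval2 : x (((i:ℕ) + u : ℕ) : Fin n) = x i := by
      rw [hx, xfun_natCast hRn]
      have hmod : ((i:ℕ) + u) % R = (i:ℕ) % R := by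
        rw [hc, Nat.add_mul_mod_self_left]
      rw [hmod]
      rfl
    rw [hpow, hxval2]; ring
  rw [twist_iter_decomp heN x m, hSx]
  have h1 := hfixu (m % n) (Nat.mod_lt _ hn0) ((Nat.dvd_mod_iff hRn).mpr hRm)
  funext i
  rw [h1]; ring

lemma xfun_zero [NeZero n] (hR4 : 4 ≤ R) (hn4 : 4 ≤ n) : xfun n R (0 : Fin n) = 1 := by
  have h0 : ((0 : Fin n) : ℕ) = 0 := by
    have : (0 : Fin n) = ((0 : ℕ) : Fin n) := by norm_num
    rw [this, Fin.val_natCast, Nat.zero_mod]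
  unfold xfun
  rw [h0]
  simp

lemma xfun_one [NeZero n] (hR4 : 4 ≤ R) (hn4 : 4 ≤ n) : xfun n R (((1:ℕ)) : Fin n) = 0 := by
  unfold xfun
  rw [Fin.val_natCast, Nat.mod_eq_of_lt (show 1 < n by omega),
    Nat.mod_eq_of_lt (show 1 < R by omega), if_neg (by omega)]

lemma twist_xfun_zero [NeZero n] (hR4 : 4 ≤ R) (hn4 : 4 ≤ n) :
    twist n (xfun n R) (0 : Fin n) = 2 := by
  have h0 : ((0 : Fin n) : ℕ) = 0 := by
    have : (0 : Fin n) = ((0 : ℕ) : Fin n) := by norm_num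
    rw [this, Fin.val_natCast, Nat.zero_mod]
  rw [twist_lt _ _ (by omega), xfun_zero hR4 hn4, h0, xfun_one hR4 hn4]
  ring

lemma branch4_colors (hR4 : 4 ≤ R) (hRe : Even R) (hRn : R ∣ n) (hRm : R ∣ m)
    (hn0 : 0 < n) (hnm : n ≤ m) (hm4 : 4 ≤ m) (hn4 : 4 ≤ n) :
    colors n m (xfun n R) = {0, 1, 2, 3} := by
  haveI : NeZero n := ⟨by omega⟩
  have heN : Even n := (even_iff_two_dvd).mpr (dvd_trans hRe.two_dvd hRn)
  set x : Fin n → ℤ := xfun n R with hx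
  apply Set.eq_of_subset_of_subset
  · rintro c ⟨k, hk, i, rfl⟩
    have hSx : ∑ j ∈ Finset.range n, (-1:ℤ)^j * x ((j:ℕ) : Fin n) = 0 :=
      xfun_sum_dvd hR4 hRe hRn n hRn
    have h1 := congrFun (twist_iter_decomp heN x k) i
    rw [hSx, mul_zero, add_zero] at h1
    set u : ℕ := k % n with hu
    have hun : u < n := Nat.mod_lt _ hn0
    have h2 := twistA x u (le_of_lt hun) i
    set w : ℕ := u % R with hw
    have hwR : w < R := Nat.mod_lt _ (by omega)
    have huw : u = (u/R)*R + w := by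
      rw [hw, Nat.mul_comm]
      exact (Nat.div_add_mod u R).symm
    have hSu : ∑ j ∈ Finset.range u, (-1:ℤ)^j * x ((j:ℕ) : Fin n)
        = (if w = 0 then 0 else 1) := by
      rw [Finset.sum_congr rfl (fun j _ => gfun_eq hRn j)]
      conv_lhs => rw [huw]
      rw [Finset.sum_range_add, gfun_summul hR4 hRe]
      have hsft : ∑ t ∈ Finset.range w, gfun R ((u/R)*R + t) = ∑ t ∈ Finset.range w, gfun R t :=
        Finset.sum_congr rfl fun t _ => by rw [Nat.add_comm, gfun_shift hRe]
      rw [hsft]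
      by_cases hw0 : w = 0
      · simp [hw0]
      · rw [gfun_sum_lt hR4 w hwR hw0, if_neg hw0]; ring
    have hpw : (-1:ℤ)^u = (-1:ℤ)^w := by
      conv_lhs => rw [huw]
      rw [pow_add, Even.neg_one_pow (hRe.mul_left (u/R)), one_mul]
    have hε : x (((i:ℕ) + u : ℕ) : Fin n) = 1 ∨ x (((i:ℕ) + u : ℕ) : Fin n) = 0 := by
      rw [hx, xfun_natCast hRn]
      by_cases hcond : ((i:ℕ) + u) % R = 0 ∨ ((i:ℕ) + u) % R = R - 1
      · left; rw [if_pos hcond]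
      · right; rw [if_neg hcond]
    rw [h2, hSu, hpw] at h1
    simp only [Set.mem_insert_iff, Set.mem_singleton_iff]
    by_cases hw0 : w = 0
    · rw [if_pos hw0, hw0] at h1
      rcases hε with h | h <;> rw [h] at h1 <;> simp [h1]
    · rw [if_neg hw0] at h1
      rcases Nat.even_or_odd w with hpar | hpar
      · rw [hpar.neg_one_pow] at h1
        rcases hε with h | h <;> rw [h] at h1 <;> simp [h1] <;> norm_num [h1]
      · rw [hpar.neg_one_pow] at h1
        rcases hε with h | h <;> rw [h] at h1 <;> simp [h1] <;> norm_num [h1]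
  · intro c hc
    simp only [Set.mem_insert_iff, Set.mem_singleton_iff] at hc
    have hmem : ∀ k < m, ∀ i : Fin n, (twist n)^[k] x i = c → c ∈ colors n m x :=
      fun k hk i hi => ⟨k, hk, i, hi⟩
    rcases hc with rfl | rfl | rfl | rfl
    · -- 0 : k = 0, i = 1
      exact hmem 0 (by omega) (((1:ℕ)) : Fin n) (by
        simp only [Function.iterate_zero, id_eq]
        exact xfun_one hR4 hn4)
    · -- 1 : k = 0, i = 0
      exact hmem 0 (by omega) (0 : Fin n) (by
        simp only [Function.iterate_zero, id_eq]
        exact xfun_zero hR4 hn4)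
    · -- 2 : k = 1, i = 0
      exact hmem 1 (by omega) (0 : Fin n) (by
        simp only [Function.iterate_one]
        exact twist_xfun_zero hR4 hn4)
    · -- 3 : k = 2, i = n-2
      refine hmem 2 (by omega) (((n-2 : ℕ)) : Fin n) ?_
      have hival : ((((n-2:ℕ)) : Fin n) : ℕ) = n - 2 := by
        rw [Fin.val_natCast]; exact Nat.mod_eq_of_lt (by omega)
      have h2 : (twist n)^[2] x (((n-2:ℕ)) : Fin n)
          = twist n (twist n x) (((n-2:ℕ)) : Fin n) := by
        have := congrFun (Function.iterate_succ_apply' (twist n) 1 x) (((n-2:ℕ)) : Fin n)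
        rw [Function.iterate_one] at this
        exact this
      rw [h2, twist_lt _ _ (by rw [hival]; omega : ((((n-2:ℕ)) : Fin n) : ℕ) + 1 < n)]
      rw [hival, twist_xfun_zero hR4 hn4]
      have hlast : twist n x (((n-2+1 : ℕ)) : Fin n) = x 0 := by
        apply twist_last
        rw [Fin.val_natCast, Nat.mod_eq_of_lt (by omega)]
        omega
      rw [hlast, hx, xfun_zero hR4 hn4]
      norm_num
end b4

theorem stmt_2 (p q r : ℤ) (hp : p ≠ 0) (hgcd : Int.gcd p q = 1)
    (hq1 : 1 ≤ q) (hqp : q ≤ |p|) (hr2 : 2 ≤ r) (hre : Even r)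
    (n m : ℕ) (hn : (n : ℤ) = q * r) (hm : (m : ℤ) = |p| * r)
    (hex : ∃ x : Fin n → ℤ, (twist n)^[m] x = x ∧ 2 ≤ (colors n m x).encard) :
    ∃ x : Fin n → ℤ, (twist n)^[m] x = x ∧ colors n m x = {0, 1, 2, 3} := by
  have hp1 : 1 ≤ |p| := Int.one_le_abs hp
  have hPabs : ((p.natAbs : ℤ)) = |p| := Int.natCast_natAbs p
  by_cases hr : r = 2
  · -- r = 2 : contradiction from hex
    exfalso
    subst hr
    set P : ℕ := p.natAbs with hP
    set Qn : ℕ := q.natAbs with hQn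
    have hQcast : ((Qn : ℕ) : ℤ) = q := by rw [hQn]; omega
    have hn' : n = 2 * Qn := by omega
    have hm' : m = 2 * P := by
      rw [← hPabs] at hm; omega
    have hQn1 : 1 ≤ Qn := by omega
    have hco : Nat.gcd P Qn = 1 := hgcd
    -- Bezout: find t with (t*m) % n = 2 % n
    have hB : ∃ t : ℕ, (t * m) % n = 2 % n := by
      set α : ℤ := Nat.gcdA P Qn with hα
      set β : ℤ := Nat.gcdB P Qn with hβ
      have hbez : (1:ℤ) = P * α + Qn * β := by
        have := Nat.gcd_eq_gcd_ab P Qn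
        rw [hco] at this
        exact_mod_cast this
      have hQz : (Qn:ℤ) ≠ 0 := by exact_mod_cast (by omega : Qn ≠ 0)
      set e : ℤ := α % (Qn:ℤ) with he
      have he0 : 0 ≤ e := Int.emod_nonneg α hQz
      set t : ℕ := e.toNat with ht
      have hte : (t:ℤ) = e := Int.toNat_of_nonneg he0
      have hZ : ((t:ℤ) * P) % Qn = 1 % Qn := by
        rw [hte, he]
        have h1 : (α % (Qn:ℤ) * P) % Qn = (α * P) % Qn := by
          conv_rhs => rw [Int.mul_emod]
          rw [Int.mul_emod, Int.emod_emod_of_dvd _ dvd_rfl]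
        rw [h1, show α * (P:ℤ) = 1 + (Qn:ℤ) * (-β) by linarith [hbez],
          Int.add_mul_emod_self_left]
      have hN : (t * P) % Qn = 1 % Qn := by exact_mod_cast hZ
      refine ⟨t, ?_⟩
      rw [hn', hm', show t * (2 * P) = 2 * (t * P) by ring,
        Nat.mul_mod_mul_left, hN, ← Nat.mul_mod_mul_left]
    obtain ⟨x, hfix, hcard⟩ := hex
    have hn2 : 2 ≤ n := by omega
    have hm1 : 1 ≤ m := by omega
    have hconst := branch2 n m hn2 hm1 Qn P hn' hm' hB x hfix
    set c : ℤ := x ⟨0, by omega⟩ with hc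
    have htw : twist n x = x := by
      funext i
      haveI : NeZero n := ⟨by omega⟩
      by_cases h : (i:ℕ)+1 < n
      · rw [twist_lt _ _ h, hconst (0 : Fin n), hconst ((((i:ℕ)+1 : ℕ)) : Fin n), hconst i]
        ring
      · rw [twist_last _ _ h, hconst (0 : Fin n), hconst i]
    have hcol : colors n m x = {c} := by
      apply Set.eq_of_subset_of_subset
      · rintro e ⟨k, hk, i, rfl⟩
        rw [Function.iterate_fixed htw k, hconst i]
        rfl
      · intro e he
        rw [Set.mem_singleton_iff] at he
        exact ⟨0, by omega, ⟨0, by omega⟩, by simp [he, hc]⟩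
    rw [hcol, Set.encard_singleton] at hcard
    norm_num at hcard
  · -- r ≥ 4
    have hr4 : 4 ≤ r := by
      rcases hre with ⟨k, hk⟩
      omega
    set R : ℕ := r.toNat with hR
    have hRcast : ((R:ℕ) : ℤ) = r := by omega
    have hR4 : 4 ≤ R := by omega
    have hRe : Even R := by
      rcases hre with ⟨k, hk⟩
      exact ⟨k.toNat, by omega⟩
    set Qn : ℕ := q.toNat with hQn
    set P : ℕ := p.natAbs with hP
    have hQcast : ((Qn:ℕ) : ℤ) = q := by omega
    have hn' : n = Qn * R := by
      have : ((Qn * R : ℕ) : ℤ) = q * r := by push_cast [hQcast, hRcast]; ring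
      omega
    have hm' : m = P * R := by
      have : ((P * R : ℕ) : ℤ) = |p| * r := by
        push_cast [hPabs, hRcast]; ring
      omega
    have hQn1 : 1 ≤ Qn := by omega
    have hP1 : 1 ≤ P := by omega
    have hRn : R ∣ n := ⟨Qn, by rw [hn', Nat.mul_comm]⟩
    have hRm : R ∣ m := ⟨P, by rw [hm', Nat.mul_comm]⟩
    have hn0 : 0 < n := by
      have : Qn * R ≥ 1 * 4 := Nat.mul_le_mul hQn1 hR4
      omega
    have hn4 : 4 ≤ n := by
      have : Qn * R ≥ 1 * 4 := Nat.mul_le_mul hQn1 hR4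
      omega
    have hm4 : 4 ≤ m := by
      have : P * R ≥ 1 * 4 := Nat.mul_le_mul hP1 hR4
      omega
    have hnm : n ≤ m := by
      have : Qn * R ≤ P * R := Nat.mul_le_mul_right R (by omega)
      omega
    exact ⟨xfun n R, branch4 hR4 hRe hRn hRm hn0 hm4,
      branch4_colors hR4 hRe hRn hRm hn0 hnm hm4 hn4⟩
end

section
/- Let p, q, r be integers with p ≠ 0, gcd(p, q) = 1, |p| ≥ q ≥ 1, r ≥ 2 and r odd, and assume p is even or q is even. Set n = qr, m = |p|·r. Then there is no x ∈ ℤ^n with T_n^m(x) = x and C(x) = {0, 1, 2, 3}; that is, the standard diagram of T(pr, qr) admits no Z-coloring whose set of colors is exactly {0, 1, 2, 3}. -/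
private lemma twist_eval {n : ℕ} (hn : 0 < n) (y : Fin n → ℤ) (i : Fin n) :
    twist n y i = if h : (i : ℕ) + 1 < n then 2 * y ⟨0, hn⟩ - y ⟨(i : ℕ) + 1, h⟩
      else y ⟨0, hn⟩ := rfl

private lemma per_mul {α : Sort*} {f : ℕ → α} {m : ℕ} (h : ∀ k, f (k + m) = f k) :
    ∀ t k, f (k + m * t) = f k := by
  intro t
  induction t with
  | zero => simp
  | succ t ih =>
      intro k
      have e : k + m * (t + 1) = (k + m * t) + m := by ring
      rw [e, h, ih]

private lemma per_gcd {α : Sort*} (f : ℕ → α) :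
    ∀ m n : ℕ, (∀ k, f (k + m) = f k) → (∀ k, f (k + n) = f k) →
      ∀ k, f (k + Nat.gcd m n) = f k := by
  intro m n
  induction m, n using Nat.gcd.induction with
  | H0 n => intro _ h2 k; simpa using h2 k
  | H1 m n hm ih =>
      intro h1 h2 k
      rw [Nat.gcd_rec]
      apply ih
      · intro k'
        have A := per_mul h1 (n / m) (k' + n % m)
        have e2 : k' + n % m + m * (n / m) = k' + n := by
          rw [Nat.add_assoc, Nat.mod_add_div]
        rw [e2] at A
        rw [← A]; exact h2 k'
      · exact h1

private lemma no_four (n m R : ℕ) (hn : 0 < n) (hm : 0 < m)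
    (hR : R = Nat.gcd m n) (hRodd : Odd R)
    (x : Fin n → ℤ) (hfix : (twist n)^[m] x = x)
    (hcol : colors n m x = {0, 1, 2, 3}) : False := by
  obtain ⟨w, hw⟩ : ∃ w : ℕ → Fin n → ℤ, ∀ k, w k = (twist n)^[k] x := ⟨_, fun _ => rfl⟩
  have hwsucc : ∀ k, w (k + 1) = twist n (w k) := by
    intro k; rw [hw, hw, Function.iterate_succ_apply']
  have hper : ∀ k, w (k + m) = w k := by
    intro k; rw [hw, hw, Function.iterate_add_apply, hfix]
  have hmul : ∀ t k, w (k + m * t) = w k := per_mul hper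
  have hmod : ∀ k, w k = w (k % m) := by
    intro k
    conv_lhs => rw [← Nat.mod_add_div k m]
    exact hmul (k / m) (k % m)
  have hmem : ∀ k (i : Fin n), w k i = 0 ∨ w k i = 1 ∨ w k i = 2 ∨ w k i = 3 := by
    intro k i
    have hc : w k i ∈ colors n m x := by
      refine ⟨k % m, Nat.mod_lt _ hm, i, ?_⟩
      rw [← hw, ← hmod]
    rw [hcol] at hc
    simpa using hc
  have hlb : ∀ k i, 0 ≤ w k i ∧ w k i ≤ 3 := by
    intro k i; rcases hmem k i with h|h|h|h <;> omega
  have hmemc : ∀ c : ℤ, c ∈ ({0,1,2,3} : Set ℤ) → ∃ k, k < m ∧ ∃ i : Fin n, w k i = c := by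
    intro c hc
    rw [← hcol] at hc
    obtain ⟨k, hk, i, hi⟩ := hc
    exact ⟨k, hk, i, by rw [hw]; exact hi⟩
  have hgetge : ∀ c : ℤ, c ∈ ({0,1,2,3} : Set ℤ) → ∀ N, ∃ k, N ≤ k ∧ ∃ i : Fin n, w k i = c := by
    intro c hc N
    obtain ⟨k, hk, i, hi⟩ := hmemc c hc
    refine ⟨k + m * N, ?_, i, by rw [hmul]; exact hi⟩
    have : 1 * N ≤ m * N := Nat.mul_le_mul_right N hm
    omega
  -- constant configurations stay constant
  have hconst : ∀ (c : ℤ) k, (∀ i, w k i = c) → ∀ t i, w (k + t) i = c := by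
    intro c k hk t
    induction t with
    | zero => exact hk
    | succ t ih =>
        intro i
        have e : k + (t + 1) = (k + t) + 1 := rfl
        rw [e, hwsucc, twist_eval hn]
        split
        · rw [ih, ih]; ring
        · exact ih _
  -- heads are 1 or 2
  have hhead : ∀ k, w k ⟨0, hn⟩ = 1 ∨ w k ⟨0, hn⟩ = 2 := by
    intro k
    rcases hmem k ⟨0, hn⟩ with h|h|h|h
    · exfalso
      have hall : ∀ i, w (k+1) i = 0 := by
        intro i
        have hb := hlb (k+1) i
        rw [hwsucc, twist_eval hn] at hb ⊢
        by_cases hc : (i : ℕ) + 1 < n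
        · rw [dif_pos hc] at hb ⊢
          have hb2 := hlb k ⟨(i : ℕ) + 1, hc⟩
          omega
        · rw [dif_neg hc]; exact h
      obtain ⟨k', hk', i', hi'⟩ := hgetge 1 (by norm_num) (k+1)
      obtain ⟨t, rfl⟩ : ∃ t, k' = (k+1) + t := ⟨k' - (k+1), by omega⟩
      have := hconst 0 (k+1) hall t i'
      omega
    · exact Or.inl h
    · exact Or.inr h
    · exfalso
      have hall : ∀ i, w (k+1) i = 3 := by
        intro i
        have hb := hlb (k+1) i
        rw [hwsucc, twist_eval hn] at hb ⊢
        by_cases hc : (i : ℕ) + 1 < n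
        · rw [dif_pos hc] at hb ⊢
          have hb2 := hlb k ⟨(i : ℕ) + 1, hc⟩
          omega
        · rw [dif_neg hc]; exact h
      obtain ⟨k', hk', i', hi'⟩ := hgetge 0 (by norm_num) (k+1)
      obtain ⟨t, rfl⟩ : ∃ t, k' = (k+1) + t := ⟨k' - (k+1), by omega⟩
      have := hconst 3 (k+1) hall t i'
      omega
  -- parity function
  obtain ⟨g, hg⟩ : ∃ g : ℕ → ZMod 2,
      ∀ s, g s = ((w 0 ⟨s % n, Nat.mod_lt s hn⟩ : ℤ) : ZMod 2) := ⟨_, fun _ => rfl⟩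
  have hgcong : ∀ s t, s % n = t % n → g s = g t := by
    intro s t h
    rw [hg, hg]
    have e : (⟨s % n, Nat.mod_lt s hn⟩ : Fin n) = ⟨t % n, Nat.mod_lt t hn⟩ := Fin.ext h
    rw [e]
  have hpar : ∀ k (i : Fin n), ((w k i : ℤ) : ZMod 2) = g ((i : ℕ) + k) := by
    intro k
    induction k with
    | zero =>
        intro i
        rw [hg]
        have e : (⟨((i : ℕ) + 0) % n, Nat.mod_lt _ hn⟩ : Fin n) = i := by
          apply Fin.ext
          simp [Nat.mod_eq_of_lt i.isLt]
        rw [e]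
    | succ k ih =>
        intro i
        rw [hwsucc, twist_eval hn]
        by_cases hc : (i : ℕ) + 1 < n
        · rw [dif_pos hc]
          have hb := ih ⟨(i : ℕ) + 1, hc⟩
          have e2 : ((2 * w k ⟨0, hn⟩ - w k ⟨(i : ℕ) + 1, hc⟩ : ℤ) : ZMod 2)
              = ((w k ⟨(i : ℕ) + 1, hc⟩ : ℤ) : ZMod 2) := by
            have h2 : (2 : ZMod 2) = 0 := by decide
            push_cast
            linear_combination (((w k ⟨0, hn⟩ : ℤ) : ZMod 2)
              - ((w k ⟨(i : ℕ) + 1, hc⟩ : ℤ) : ZMod 2)) * h2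
          rw [e2, hb]
          apply hgcong
          have e4 : ((⟨(i : ℕ) + 1, hc⟩ : Fin n) : ℕ) + k = (i : ℕ) + (k + 1) := by
            show (i : ℕ) + 1 + k = (i : ℕ) + (k + 1)
            omega
          rw [e4]
        · rw [dif_neg hc]
          have hb := ih ⟨0, hn⟩
          rw [hb]
          apply hgcong
          have hi := i.isLt
          have e3 : (i : ℕ) + (k + 1) = k + n := by omega
          simp only [e3]
          rw [Nat.add_mod_right]
          congr 1
          omega
  have hga : ∀ k, ((w k ⟨0, hn⟩ : ℤ) : ZMod 2) = g k := by
    intro k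
    have := hpar k ⟨0, hn⟩
    simpa using this
  -- diagonals
  obtain ⟨v, hv⟩ : ∃ v : ℕ → ℕ → ℤ,
      ∀ s k, v s k = w k ⟨(s + k * (n-1)) % n, Nat.mod_lt _ hn⟩ := ⟨_, fun _ _ => rfl⟩
  have hstep : ∀ s k, v s (k+1) = 2 * w k ⟨0, hn⟩ - v s k := by
    intro s k
    rw [hv, hv, hwsucc, twist_eval hn]
    have hjlt : (s + k * (n-1)) % n < n := Nat.mod_lt _ hn
    rcases Nat.eq_zero_or_pos ((s + k * (n-1)) % n) with h0 | hposj
    · have e1 : (s + (k+1) * (n-1)) % n = n - 1 := by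
        rw [show s + (k+1) * (n-1) = (s + k * (n-1)) + (n-1) by ring, Nat.add_mod, h0]
        simp [Nat.mod_eq_of_lt (show n - 1 < n by omega)]
      simp only [e1]
      rw [dif_neg (by omega)]
      have e2 : (⟨(s + k * (n-1)) % n, hjlt⟩ : Fin n) = ⟨0, hn⟩ := Fin.ext h0
      rw [e2]
      ring
    · have e1 : (s + (k+1) * (n-1)) % n = (s + k * (n-1)) % n - 1 := by
        rw [show s + (k+1) * (n-1) = (s + k * (n-1)) + (n-1) by ring, Nat.add_mod,
          Nat.mod_eq_of_lt (show n - 1 < n by omega),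
          show (s + k * (n-1)) % n + (n-1) = ((s + k * (n-1)) % n - 1) + n by omega,
          Nat.add_mod_right, Nat.mod_eq_of_lt (by omega)]
      simp only [e1]
      rw [dif_pos (by omega : (s + k * (n-1)) % n - 1 + 1 < n)]
      congr 2
      exact Fin.ext (by simp; omega)
  have hvmem : ∀ s k, v s k = 0 ∨ v s k = 1 ∨ v s k = 2 ∨ v s k = 3 := by
    intro s k; rw [hv]; exact hmem _ _
  have hvpar : ∀ s k, ((v s k : ℤ) : ZMod 2) = g s := by
    intro s k
    rw [hv, hpar]
    apply hgcong
    show ((s + k * (n-1)) % n + k) % n = s % n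
    rw [Nat.mod_add_mod]
    have hmn : k * (n-1) + k = k * n := by
      have h1 : n - 1 + 1 = n := by omega
      calc k * (n-1) + k = k * ((n-1) + 1) := (Nat.mul_succ k (n-1)).symm
        _ = k * n := by rw [h1]
    rw [show s + k * (n-1) + k = s + (k * (n-1) + k) by omega, hmn,
      Nat.add_mul_mod_self_right]
  -- pick the diagonals through colors 1 and 0, and witnesses of colors 0 and 3
  obtain ⟨k1, hk1m, i1, hi1⟩ := hmemc 1 (by norm_num)
  obtain ⟨k0, hk0m, i0, hi0⟩ := hmemc 0 (by norm_num)
  obtain ⟨k3, hk3m, i3, hi3⟩ := hmemc 3 (by norm_num)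
  have hgs1 : g ((i1 : ℕ) + k1) = 1 := by
    rw [← hpar, hi1]; norm_num
  have hgs0 : g ((i0 : ℕ) + k0) = 0 := by
    rw [← hpar, hi0]; norm_num
  set s1 : ℕ := (i1 : ℕ) + k1 with hs1def
  set s0 : ℕ := (i0 : ℕ) + k0 with hs0def
  have hv1 : ∀ k, v s1 k = 1 ∨ v s1 k = 3 := by
    intro k
    have hp := hvpar s1 k
    rw [hgs1] at hp
    rcases hvmem s1 k with h|h|h|h
    · rw [h] at hp; exact absurd hp (by decide)
    · exact Or.inl h
    · rw [h] at hp; exact absurd hp (by decide)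
    · exact Or.inr h
  have hv0 : ∀ k, v s0 k = 0 ∨ v s0 k = 2 := by
    intro k
    have hp := hvpar s0 k
    rw [hgs0] at hp
    rcases hvmem s0 k with h|h|h|h
    · exact Or.inl h
    · rw [h] at hp; exact absurd hp (by decide)
    · exact Or.inr h
    · rw [h] at hp; exact absurd hp (by decide)
  have L1 : ∀ k, w k ⟨0, hn⟩ = 1 → v s1 k = 1 := by
    intro k hk
    rcases hv1 k with h|h
    · exact h
    · exfalso
      have e := hstep s1 k
      rw [hk, h] at e
      rcases hv1 (k+1) with h'|h' <;> omega
  have L2 : ∀ k, w k ⟨0, hn⟩ = 2 → v s0 k = 2 := by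
    intro k hk
    rcases hv0 k with h|h
    · exfalso
      have e := hstep s0 k
      rw [hk, h] at e
      rcases hv0 (k+1) with h'|h' <;> omega
    · exact h
  -- boundary forces specific diagonal values
  have hbdry : ∀ k, g k ≠ g (k+1) → v s1 (k+1) = 1 ∧ v s0 (k+1) = 2 := by
    intro k hne
    rcases hhead k with h1|h1 <;> rcases hhead (k+1) with h2|h2
    · exfalso; apply hne; rw [← hga k, ← hga (k+1), h1, h2]
    · constructor
      · have e := hstep s1 k
        rw [L1 k h1, h1] at e
        omega
      · exact L2 (k+1) h2
    · constructor
      · exact L1 (k+1) h2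
      · have e := hstep s0 k
        rw [L2 k h1, h1] at e
        omega
    · exfalso; apply hne; rw [← hga k, ← hga (k+1), h1, h2]
  -- alternating invariant in ZMod 4
  obtain ⟨d, hd⟩ : ∃ d : ℕ → ZMod 4, ∀ k, d k = ((v s1 k + v s0 k : ℤ) : ZMod 4) :=
    ⟨_, fun _ => rfl⟩
  have h4 : ((4 : ℤ) : ZMod 4) = 0 := by decide
  have hdstep : ∀ k, d (k+1) = - d k := by
    intro k
    rw [hd, hd]
    have e1 := hstep s1 k
    have e0 := hstep s0 k
    rcases hhead k with h|h
    · have hv1k := L1 k h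
      rw [h] at e1 e0
      rw [e1, e0, hv1k]
      push_cast
      linear_combination h4
    · have hv0k := L2 k h
      rw [h] at e1 e0
      rw [e1, e0, hv0k]
      push_cast
      linear_combination 2 * h4
  have hdpow : ∀ k t, d (k + t) = (-1)^t * d k := by
    intro k t
    induction t with
    | zero => simp
    | succ t ih =>
        rw [show k + (t+1) = (k+t)+1 from rfl, hdstep, ih, pow_succ]
        ring
  -- periodicity of g with period R
  have hgm : ∀ k, g (k + m) = g k := by
    intro k
    rw [← hga, ← hga, hper]
  have hgn : ∀ k, g (k + n) = g k := fun k => hgcong _ _ (Nat.add_mod_right k n)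
  have hgR : ∀ k, g (k + R) = g k := by
    intro k; rw [hR]; exact per_gcd g m n hgm hgn k
  -- a time with head 1 and a time with head 2
  have hhk0 : w k0 ⟨0, hn⟩ = 1 := by
    have hi0pos : 0 < (i0 : ℕ) := by
      rcases Nat.eq_zero_or_pos (i0 : ℕ) with h|h
      · exfalso
        have e : i0 = (⟨0, hn⟩ : Fin n) := Fin.ext h
        rw [e] at hi0
        rcases hhead k0 with h'|h' <;> omega
      · exact h
    obtain ⟨j0, hj0⟩ : ∃ j : Fin n, (j : ℕ) = (i0 : ℕ) - 1 :=
      ⟨⟨(i0 : ℕ) - 1, by have := i0.isLt; omega⟩, rfl⟩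
    have hlt : (j0 : ℕ) + 1 < n := by have := i0.isLt; omega
    have hieq : ∀ (hpf : (j0 : ℕ) + 1 < n), (⟨(j0 : ℕ) + 1, hpf⟩ : Fin n) = i0 :=
      fun _ => Fin.ext (show (j0 : ℕ) + 1 = (i0 : ℕ) by omega)
    have e : w (k0+1) j0 = 2 * w k0 ⟨0, hn⟩ - w k0 i0 := by
      rw [hwsucc, twist_eval hn, dif_pos hlt, hieq]
    rw [hi0] at e
    have hb := hlb (k0+1) j0
    rcases hhead k0 with h'|h'
    · exact h'
    · exfalso; rw [h'] at e; omega
  have hhk3 : w k3 ⟨0, hn⟩ = 2 := by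
    have hi3pos : 0 < (i3 : ℕ) := by
      rcases Nat.eq_zero_or_pos (i3 : ℕ) with h|h
      · exfalso
        have e : i3 = (⟨0, hn⟩ : Fin n) := Fin.ext h
        rw [e] at hi3
        rcases hhead k3 with h'|h' <;> omega
      · exact h
    obtain ⟨j3, hj3⟩ : ∃ j : Fin n, (j : ℕ) = (i3 : ℕ) - 1 :=
      ⟨⟨(i3 : ℕ) - 1, by have := i3.isLt; omega⟩, rfl⟩
    have hlt : (j3 : ℕ) + 1 < n := by have := i3.isLt; omega
    have hieq : ∀ (hpf : (j3 : ℕ) + 1 < n), (⟨(j3 : ℕ) + 1, hpf⟩ : Fin n) = i3 :=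
      fun _ => Fin.ext (show (j3 : ℕ) + 1 = (i3 : ℕ) by omega)
    have e : w (k3+1) j3 = 2 * w k3 ⟨0, hn⟩ - w k3 i3 := by
      rw [hwsucc, twist_eval hn, dif_pos hlt, hieq]
    rw [hi3] at e
    have hb := hlb (k3+1) j3
    rcases hhead k3 with h'|h'
    · exfalso; rw [h'] at e; omega
    · exact h'
  have hgk0 : g k0 = 1 := by rw [← hga k0, hhk0]; decide
  have hgk3 : g k3 = 0 := by rw [← hga k3, hhk3]; decide
  -- a boundary exists
  obtain ⟨kb, hkb⟩ : ∃ k, g k ≠ g (k+1) := by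
    by_contra hcon
    push_neg at hcon
    have hcst : ∀ t k, g (k + t) = g k := by
      intro t
      induction t with
      | zero => simp
      | succ t ih =>
          intro k
          rw [show k + (t+1) = (k+t)+1 from rfl, ← hcon (k+t), ih]
    have hee : g k0 = g k3 := by
      rcases le_total k0 k3 with h|h
      · rw [show k3 = k0 + (k3 - k0) by omega, hcst]
      · rw [show k0 = k3 + (k0 - k3) by omega, hcst]
    rw [hgk0, hgk3] at hee
    exact absurd hee (by decide)
  -- conclude
  have hb1 := hbdry kb hkb
  have hkb2 : g (kb + R) ≠ g (kb + R + 1) := by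
    rw [hgR, show kb + R + 1 = (kb + 1) + R by omega, hgR]
    exact hkb
  have hb2 := hbdry (kb + R) hkb2
  have hd1 : d (kb + 1) = ((3 : ℤ) : ZMod 4) := by
    rw [hd, hb1.1, hb1.2]; norm_num
  have hd2 : d (kb + R + 1) = ((3 : ℤ) : ZMod 4) := by
    rw [hd, hb2.1, hb2.2]; norm_num
  have hflip : d (kb + R + 1) = - d (kb + 1) := by
    rw [show kb + R + 1 = (kb + 1) + R by omega, hdpow, hRodd.neg_one_pow]
    ring
  rw [hd1, hd2] at hflip
  have h3 : ((3 : ℤ) : ZMod 4) = 3 := by norm_num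
  rw [h3] at hflip
  exact absurd hflip (by decide)

theorem stmt_3 (p q r : ℤ) (hp : p ≠ 0) (hgcd : Int.gcd p q = 1)
    (hq1 : 1 ≤ q) (hqp : q ≤ |p|) (hr2 : 2 ≤ r) (hro : Odd r)
    (heven : Even p ∨ Even q)
    (n m : ℕ) (hn : (n : ℤ) = q * r) (hm : (m : ℤ) = |p| * r) :
    ¬ ∃ x : Fin n → ℤ, (twist n)^[m] x = x ∧ colors n m x = {0, 1, 2, 3} := by
  rintro ⟨x, hfix, hcol⟩
  have hrpos : (0:ℤ) < r := by omega
  have hn0 : 0 < n := by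
    have h : (0:ℤ) < (n:ℤ) := by rw [hn]; exact mul_pos (by omega) hrpos
    exact_mod_cast h
  have hm0 : 0 < m := by
    have h : (0:ℤ) < (m:ℤ) := by rw [hm]; exact mul_pos (abs_pos.mpr hp) hrpos
    exact_mod_cast h
  have hgcdmn : Nat.gcd m n = r.natAbs := by
    have h1 : Int.gcd (m:ℤ) (n:ℤ) = Nat.gcd m n := Int.gcd_natCast_natCast m n
    rw [hm, hn] at h1
    rw [← h1, Int.gcd_mul_right]
    have habs : Int.gcd |p| q = Int.gcd p q := by simp [Int.gcd, Int.natAbs_abs]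
    rw [habs, hgcd, one_mul]
  have hRodd : Odd r.natAbs := Int.natAbs_odd.mpr hro
  exact no_four n m r.natAbs hn0 hm0 hgcdmn.symm hRodd x hfix hcol
end

section
/- Let p, q, r be integers with p ≠ 0, gcd(p, q) = 1, |p| ≥ q ≥ 1, r ≥ 2 and r odd, and assume p is even or q is even. Set n = qr, m = |p|·r. Then there exists x ∈ ℤ^n with T_n^m(x) = x such that C(x) = {0, 1, 2, 3, 4}. -/
def Ssum (X : ℕ → ℤ) (k : ℕ) : ℤ := ∑ j ∈ Finset.range k, (-1)^j * X j

lemma twist_iter {n : ℕ} (X : ℕ → ℤ) (hX : ∀ j, X (j + n) = X j)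
    (k : ℕ) (i : Fin n) :
    (twist n)^[k] (fun j : Fin n => X j) i = 2 * Ssum X k + (-1)^k * X (i + k) := by
  induction k generalizing i with
  | zero => simp [Ssum]
  | succ k ih =>
    rw [Function.iterate_succ_apply']
    have hs : Ssum X (k+1) = Ssum X k + (-1)^k * X k := Finset.sum_range_succ _ k
    simp only [twist]
    split_ifs with h
    · rw [ih ⟨0, i.pos⟩, ih ⟨(i : ℕ) + 1, h⟩]
      simp only [Fin.val_mk]
      have h1 : (i : ℕ) + 1 + k = (i : ℕ) + (k + 1) := by omega
      rw [h1, hs, zero_add, pow_succ]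
      ring
    · have hin : (i : ℕ) + 1 = n := by omega
      rw [ih ⟨0, i.pos⟩]
      simp only [Fin.val_mk]
      have h1 : (i : ℕ) + (k + 1) = k + n := by omega
      rw [h1, hX k, hs, zero_add, pow_succ]
      ring

lemma iterate_mul_fixed {α : Type*} (f : α → α) (d : ℕ) (x : α) (hx : f^[d] x = x) :
    ∀ t, f^[d * t] x = x := by
  intro t
  induction t with
  | zero => simp
  | succ t ih =>
    have : d * (t + 1) = d * t + d := by ring
    rw [this, Function.iterate_add_apply, hx, ih]

lemma iterate_mod {α : Type*} (f : α → α) (d : ℕ) (x : α) (hx : f^[d] x = x) (k : ℕ) :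
    f^[k] x = f^[k % d] x := by
  conv_lhs => rw [← Nat.mod_add_div k d]
  rw [Function.iterate_add_apply, iterate_mul_fixed f d x hx]

def XB (R : ℕ) : ℕ → ℤ := fun j => if j % R = 1 then 0 else 1

lemma XB_mem (R j : ℕ) : XB R j = 0 ∨ XB R j = 1 := by
  unfold XB; split_ifs <;> simp

lemma XB_per (R j : ℕ) : XB R (j + R) = XB R j := by
  unfold XB; rw [Nat.add_mod_right]

lemma SB (R : ℕ) (hR : 3 ≤ R) (hRo : R % 2 = 1) :
    ∀ k, k ≤ 2 * R →
      Ssum (XB R) k = (if k % 2 = 1 then 1 else 0)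
        + (if 2 ≤ k ∧ k ≤ R + 1 then 1 else 0) := by
  intro k
  induction k with
  | zero => intro _; simp [Ssum]
  | succ k ih =>
    intro hk
    have hk' : k < 2 * R := by omega
    have hS : Ssum (XB R) (k+1) = Ssum (XB R) k + (-1)^k * XB R k :=
      Finset.sum_range_succ _ k
    have hXB : XB R k = if k = 1 ∨ k = R + 1 then 0 else 1 := by
      unfold XB
      rcases lt_or_ge k R with h | h
      · rw [Nat.mod_eq_of_lt h]
        split_ifs with h1 h2 h2 <;> omega
      · rw [Nat.mod_eq_sub_mod h, Nat.mod_eq_of_lt (by omega)]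
        split_ifs with h1 h2 h2 <;> omega
    rw [hS, ih (by omega), hXB]
    rcases Nat.even_or_odd k with he | he
    · rw [he.neg_one_pow]
      have h2 : k % 2 = 0 := Nat.even_iff.mp he
      split_ifs <;> (try exact ‹False›.elim) <;> first | omega | norm_num
    · rw [he.neg_one_pow]
      have h2 : k % 2 = 1 := Nat.odd_iff.mp he
      split_ifs <;> (try exact ‹False›.elim) <;> first | omega | norm_num

def XA (R : ℕ) : ℕ → ℤ := fun j =>
  if j % (2 * R) = 0 then 1
  else if j % (2 * R) < R then 0
  else if j % (2 * R) = R then 1 else 2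

lemma XA_mem (R j : ℕ) : XA R j = 0 ∨ XA R j = 1 ∨ XA R j = 2 := by
  unfold XA; split_ifs <;> simp

lemma XA_refl (R : ℕ) (hR : 1 ≤ R) (j : ℕ) : XA R j + XA R (j + R) = 2 := by
  unfold XA
  have h1 : (j + R) % (2 * R) = (j % (2 * R) + R) % (2 * R) := by
    conv_lhs => rw [Nat.add_mod, Nat.mod_eq_of_lt (show R < 2*R by omega)]
  have h2 : j % (2 * R) < 2 * R := Nat.mod_lt _ (by omega)
  rcases lt_or_ge (j % (2 * R)) R with h | h
  · have h3 : (j + R) % (2 * R) = j % (2 * R) + R := by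
      rw [h1, Nat.mod_eq_of_lt (by omega)]
    rw [h3]; split_ifs <;> omega
  · have h3 : (j + R) % (2 * R) = j % (2 * R) - R := by
      rw [h1, Nat.mod_eq_sub_mod (by omega), Nat.mod_eq_of_lt (by omega)]
      omega
    rw [h3]; split_ifs <;> omega

lemma SA (R : ℕ) (hR : 3 ≤ R) :
    ∀ k, k ≤ R → Ssum (XA R) k = if k = 0 then 0 else 1 := by
  intro k
  induction k with
  | zero => intro _; simp [Ssum]
  | succ k ih =>
    intro hk
    have hS : Ssum (XA R) (k+1) = Ssum (XA R) k + (-1)^k * XA R k :=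
      Finset.sum_range_succ _ k
    have hXA : XA R k = if k = 0 then 1 else 0 := by
      unfold XA
      rw [Nat.mod_eq_of_lt (by omega)]
      split_ifs <;> omega
    rw [hS, ih (by omega), hXA]
    rcases Nat.even_or_odd k with he | he
    · rw [he.neg_one_pow]
      split_ifs <;> (try exact ‹False›.elim) <;> first | omega | norm_num
    · rw [he.neg_one_pow]
      have h2 : k % 2 = 1 := Nat.odd_iff.mp he
      split_ifs <;> (try exact ‹False›.elim) <;> first | omega | norm_num

theorem stmt_4 (p q r : ℤ) (hp : p ≠ 0) (hgcd : Int.gcd p q = 1)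
    (hq1 : 1 ≤ q) (hqp : q ≤ |p|) (hr2 : 2 ≤ r) (hro : Odd r)
    (heven : Even p ∨ Even q)
    (n m : ℕ) (hn : (n : ℤ) = q * r) (hm : (m : ℤ) = |p| * r) :
    ∃ x : Fin n → ℤ, (twist n)^[m] x = x ∧ colors n m x = {0, 1, 2, 3, 4} := by
  obtain ⟨R, hR⟩ : ∃ R : ℕ, (R : ℤ) = r := ⟨r.toNat, Int.toNat_of_nonneg (by omega)⟩
  obtain ⟨Q, hQ⟩ : ∃ Q : ℕ, (Q : ℤ) = q := ⟨q.toNat, Int.toNat_of_nonneg (by omega)⟩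
  have hPabs : ((p.natAbs : ℤ)) = |p| := (Int.abs_eq_natAbs p).symm
  set P := p.natAbs with hPdef
  have hRodd : R % 2 = 1 := by
    obtain ⟨t, ht⟩ := hro; omega
  have hR3 : 3 ≤ R := by omega
  have hQ1 : 1 ≤ Q := by omega
  have hP1 : 1 ≤ P := by
    have := Int.one_le_abs (by omega : p ≠ 0)
    omega
  have hn' : n = Q * R := by
    have : (n : ℤ) = ((Q * R : ℕ) : ℤ) := by push_cast; rw [hQ, hR]; exact hn
    exact_mod_cast this
  have hm' : m = P * R := by
    have : (m : ℤ) = ((P * R : ℕ) : ℤ) := by push_cast; rw [hPabs, hR]; exact hm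
    exact_mod_cast this
  rcases heven with hpe | hqe
  · -- Case B : p even; use XB R
    have hPe : P % 2 = 0 := Nat.even_iff.mp (Int.natAbs_even.mpr hpe)
    have hP2 : 2 ≤ P := by omega
    have hm6 : 6 ≤ m := by
      rw [hm']; calc (6:ℕ) = 2 * 3 := rfl
      _ ≤ P * R := Nat.mul_le_mul hP2 hR3
    have hXper : ∀ j, XB R (j + n) = XB R j := by
      intro j
      unfold XB
      rw [hn', Nat.add_mul_mod_self_right]
    set x : Fin n → ℤ := fun j : Fin n => XB R j with hx
    have hfix2R : (twist n)^[2 * R] x = x := by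
      funext i
      rw [hx, twist_iter (XB R) hXper]
      rw [SB R hR3 hRodd (2 * R) (le_refl _)]
      have h1 : (-1 : ℤ) ^ (2 * R) = 1 := (even_two_mul R).neg_one_pow
      have h2 : XB R (↑i + 2 * R) = XB R ↑i := by
        have : (i : ℕ) + 2 * R = ((i : ℕ) + R) + R := by ring
        rw [this, XB_per, XB_per]
      rw [h1, h2]
      have h3 : (2 * R) % 2 = 0 := by omega
      have h4 : ¬ (2 ≤ 2 * R ∧ 2 * R ≤ R + 1) := by omega
      rw [if_neg (by omega), if_neg h4]
      ring
    have hfixm : (twist n)^[m] x = x := by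
      obtain ⟨t, ht⟩ := Nat.even_iff.mpr hPe
      have : m = (2 * R) * t := by rw [hm', ht]; ring
      rw [this]
      exact iterate_mul_fixed _ _ _ hfix2R t
    refine ⟨x, hfixm, ?_⟩
    apply Set.Subset.antisymm
    · rintro c ⟨k, hk, i, hv⟩
      rw [iterate_mod (twist n) (2 * R) x hfix2R k] at hv
      set k' := k % (2 * R) with hk'def
      have hk'lt : k' < 2 * R := Nat.mod_lt _ (by omega)
      rw [hx, twist_iter (XB R) hXper] at hv
      rw [SB R hR3 hRodd k' (by omega)] at hv
      have hXv := XB_mem R (↑i + k')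
      simp only [Set.mem_insert_iff, Set.mem_singleton_iff]
      rcases Nat.even_or_odd k' with he | he
      · rw [he.neg_one_pow] at hv
        have h2 : k' % 2 = 0 := Nat.even_iff.mp he
        rw [if_neg (by omega)] at hv
        by_cases hb : 2 ≤ k' ∧ k' ≤ R + 1
        · rw [if_pos hb] at hv; omega
        · rw [if_neg hb] at hv; omega
      · rw [he.neg_one_pow] at hv
        have h2 : k' % 2 = 1 := Nat.odd_iff.mp he
        rw [if_pos (by omega)] at hv
        by_cases hb : 2 ≤ k' ∧ k' ≤ R + 1
        · rw [if_pos hb] at hv; omega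
        · rw [if_neg hb] at hv; omega
    · -- witnesses
      have hn3 : 3 ≤ n := by
        rw [hn']; calc (3:ℕ) = 1 * 3 := rfl
        _ ≤ Q * R := Nat.mul_le_mul hQ1 hR3
      have hnR : R ≤ n := by
        rw [hn']
        calc R = 1 * R := by ring
        _ ≤ Q * R := Nat.mul_le_mul hQ1 (le_refl R)
      have hXB0 : XB R 0 = 1 := by unfold XB; rw [Nat.mod_eq_of_lt (by omega)]; simp
      have hXB1 : XB R 1 = 0 := by unfold XB; rw [Nat.mod_eq_of_lt (by omega)]; simp
      have hXB2 : XB R 2 = 1 := by unfold XB; rw [Nat.mod_eq_of_lt (by omega)]; simp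
      have hXBr1 : XB R (R + 1) = 0 := by
        unfold XB
        rw [Nat.add_comm, Nat.add_mod_right, Nat.mod_eq_of_lt (by omega)]
        simp
      have hval : ∀ (k : ℕ) (i : Fin n),
          (twist n)^[k] x i = 2 * Ssum (XB R) k + (-1)^k * XB R (↑i + k) := by
        intro k i; rw [hx, twist_iter (XB R) hXper]
      have hS0 : Ssum (XB R) 0 = 0 := by simp [Ssum]
      have hS1 : Ssum (XB R) 1 = 1 := by
        rw [SB R hR3 hRodd 1 (by omega), if_pos (by omega), if_neg (by omega)]
        norm_num
      have hS2 : Ssum (XB R) 2 = 1 := by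
        rw [SB R hR3 hRodd 2 (by omega), if_neg (by omega), if_pos (by omega)]
        norm_num
      have hS3 : Ssum (XB R) 3 = 2 := by
        rw [SB R hR3 hRodd 3 (by omega), if_pos (by omega), if_pos (by omega)]
        norm_num
      rintro c (rfl | rfl | rfl | rfl | rfl)
      · exact ⟨0, by omega, ⟨1, by omega⟩, by
          rw [hval]; simp [hS0, hXB1]⟩
      · exact ⟨0, by omega, ⟨0, by omega⟩, by
          rw [hval]; simp [hS0, hXB0]⟩
      · exact ⟨1, by omega, ⟨0, by omega⟩, by
          rw [hval]; simp [hS1, hXB1]⟩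
      · exact ⟨2, by omega, ⟨0, by omega⟩, by
          rw [hval]; simp [hS2, hXB2]⟩
      · refine ⟨3, by omega, ⟨R - 2, by omega⟩, ?_⟩
        rw [hval]
        have h1 : ((⟨R - 2, by omega⟩ : Fin n) : ℕ) + 3 = R + 1 := by
          simp only [Fin.val_mk]; omega
        rw [h1, hS3, hXBr1]
        norm_num
  · -- Case A : q even; use XA R
    have hQe : Q % 2 = 0 := by
      obtain ⟨t, ht⟩ := hqe; omega
    have hQ2 : 2 ≤ Q := by omega
    have hmR : R ≤ m := by
      rw [hm']; calc R = 1 * R := by ring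
      _ ≤ P * R := Nat.mul_le_mul hP1 (le_refl R)
    have hn2R : 2 * R ≤ n := by
      rw [hn']; exact Nat.mul_le_mul hQ2 (le_refl R)
    have hXper : ∀ j, XA R (j + n) = XA R j := by
      intro j
      unfold XA
      obtain ⟨u, hu⟩ := Nat.even_iff.mpr hQe
      have : n = 2 * R * u := by rw [hn', hu]; ring
      rw [this, Nat.add_mul_mod_self_left]
    set x : Fin n → ℤ := fun j : Fin n => XA R j with hx
    have hfixR : (twist n)^[R] x = x := by
      funext i
      rw [hx, twist_iter (XA R) hXper]
      rw [SA R hR3 R (le_refl _)]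
      have h1 : (-1 : ℤ) ^ R = -1 := (Nat.odd_iff.mpr hRodd).neg_one_pow
      rw [h1, if_neg (by omega)]
      have := XA_refl R (by omega) (↑i)
      linarith
    have hfixm : (twist n)^[m] x = x := by
      have : m = R * P := by rw [hm']; ring
      rw [this]
      exact iterate_mul_fixed _ _ _ hfixR P
    refine ⟨x, hfixm, ?_⟩
    apply Set.Subset.antisymm
    · rintro c ⟨k, hk, i, hv⟩
      rw [iterate_mod (twist n) R x hfixR k] at hv
      set k' := k % R with hk'def
      have hk'lt : k' < R := Nat.mod_lt _ (by omega)
      rw [hx, twist_iter (XA R) hXper] at hv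
      rw [SA R hR3 k' (by omega)] at hv
      have hXv := XA_mem R (↑i + k')
      simp only [Set.mem_insert_iff, Set.mem_singleton_iff]
      rcases Nat.even_or_odd k' with he | he
      · rw [he.neg_one_pow] at hv
        by_cases hb : k' = 0
        · rw [if_pos hb] at hv; omega
        · rw [if_neg hb] at hv; omega
      · rw [he.neg_one_pow] at hv
        have hb : ¬ (k' = 0) := by
          intro h; have := Nat.odd_iff.mp he; omega
        rw [if_neg hb] at hv; omega
    · have hval : ∀ (k : ℕ) (i : Fin n),
          (twist n)^[k] x i = 2 * Ssum (XA R) k + (-1)^k * XA R (↑i + k) := by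
        intro k i; rw [hx, twist_iter (XA R) hXper]
      have hS0 : Ssum (XA R) 0 = 0 := by simp [Ssum]
      have hS2 : Ssum (XA R) 2 = 1 := by
        rw [SA R hR3 2 (by omega)]; norm_num
      have hXA0 : XA R 0 = 1 := by
        unfold XA; rw [Nat.mod_eq_of_lt (by omega)]; simp
      have hXA1 : XA R 1 = 0 := by
        unfold XA; rw [Nat.mod_eq_of_lt (by omega)]
        rw [if_neg (by omega), if_pos (by omega)]
      have hXAr1 : XA R (R + 1) = 2 := by
        unfold XA; rw [Nat.mod_eq_of_lt (by omega)]
        rw [if_neg (by omega), if_neg (by omega), if_neg (by omega)]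
      have hXA2R : XA R (2 * R) = 1 := by
        unfold XA; rw [Nat.mod_self]; simp
      rintro c (rfl | rfl | rfl | rfl | rfl)
      · exact ⟨0, by omega, ⟨1, by omega⟩, by
          rw [hval]; simp [hS0, hXA1]⟩
      · exact ⟨0, by omega, ⟨0, by omega⟩, by
          rw [hval]; simp [hS0, hXA0]⟩
      · exact ⟨0, by omega, ⟨R + 1, by omega⟩, by
          rw [hval]; simp only [Fin.val_mk, Nat.add_zero, pow_zero, one_mul, hS0, hXAr1]; ring⟩
      · refine ⟨2, by omega, ⟨2 * R - 2, by omega⟩, ?_⟩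
        rw [hval]
        have h1 : ((⟨2 * R - 2, by omega⟩ : Fin n) : ℕ) + 2 = 2 * R := by
          simp only [Fin.val_mk]; omega
        rw [h1, hS2, hXA2R]
        norm_num
      · refine ⟨2, by omega, ⟨R - 1, by omega⟩, ?_⟩
        rw [hval]
        have h1 : ((⟨R - 1, by omega⟩ : Fin n) : ℕ) + 2 = R + 1 := by
          simp only [Fin.val_mk]; omega
        rw [h1, hS2, hXAr1]
        norm_num
end

section
/- Let p, q, r be integers with p ≠ 0, gcd(p, q) = 1, |p| ≥ q ≥ 1, r ≥ 2 and r even, and set n = qr, m = |p|·r. Write x ∈ ℤ^n as the concatenation of q blocks b_1, …, b_q ∈ ℤ^r (so b_j = (x_{(j−1)r+1}, …, x_{jr})). Then T_n^m(x) = x if and only if b_1 = b_2 = ⋯ = b_q and Δ(b_1) = 0. -/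
/-- The `j`-th block (of length `R`) of a vector `x ∈ ℤ^{QR}`. -/
def blk (Q R : ℕ) (x : Fin (Q * R) → ℤ) (j : Fin Q) (i : Fin R) : ℤ :=
  x ⟨(j : ℕ) * R + (i : ℕ), by
    calc (j : ℕ) * R + (i : ℕ) < (j : ℕ) * R + R := Nat.add_lt_add_left i.2 _
      _ = ((j : ℕ) + 1) * R := (Nat.succ_mul _ _).symm
      _ ≤ Q * R := Nat.mul_le_mul_right R j.2⟩

/-- `Δ(a) = a_1 − a_2 + a_3 − ⋯ + (−1)^{r+1} a_r` (0-indexed signs `(−1)^i`). -/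
def delta (R : ℕ) (a : Fin R → ℤ) : ℤ := ∑ i : Fin R, (-1 : ℤ) ^ (i : ℕ) * a i

section useq
variable (n : ℕ) (hn : 0 < n) (x : Fin n → ℤ)

def useq (t : ℕ) : ℤ := (twist n)^[t] x ⟨n - 1, Nat.sub_lt hn one_pos⟩

def vseq (t : ℕ) : ℤ := (-1) ^ t * useq n hn x t

lemma uv (t : ℕ) : useq n hn x t = (-1) ^ t * vseq n hn x t := by
  rw [vseq, ← mul_assoc, ← mul_pow]
  norm_num

lemma iter_zero (t : ℕ) : (twist n)^[t] x ⟨0, hn⟩ = useq n hn x (t + 1) := by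
  rw [useq, Function.iterate_succ_apply', twist]
  rw [dif_neg (show ¬ ((⟨n - 1, Nat.sub_lt hn one_pos⟩ : Fin n) : ℕ) + 1 < n from by
    simp only [Fin.val_mk]; omega)]

lemma lemU (k : ℕ) (hk : k < n) (s : ℕ) :
    (twist n)^[s + k + 1] x ⟨n - 1 - k, by omega⟩ =
      (-1) ^ k * (useq n hn x (s + 1)
        - 2 * ∑ j ∈ Finset.range k, (-1) ^ j * useq n hn x (s + 2 + j)) := by
  induction k with
  | zero => simp [useq]
  | succ k ih =>
    have hk' : k < n := by omega
    rw [show s + (k + 1) + 1 = (s + k + 1) + 1 from by omega, Function.iterate_succ_apply',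
      twist]
    rw [dif_pos (show ((⟨n - 1 - (k+1), by omega⟩ : Fin n) : ℕ) + 1 < n from by
      simp only [Fin.val_mk]; omega)]
    have e1 : (⟨((⟨n - 1 - (k+1), by omega⟩ : Fin n) : ℕ) + 1, by simp only [Fin.val_mk]; omega⟩ : Fin n)
        = ⟨n - 1 - k, by omega⟩ :=
      Fin.ext (show n - 1 - (k+1) + 1 = n - 1 - k by omega)
    rw [e1, ih hk', iter_zero n hn x (s + k + 1)]
    rw [Finset.sum_range_succ, pow_succ]
    have e2 : s + 2 + k = s + k + 1 + 1 := by omega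
    rw [e2]
    have hA : ((-1:ℤ) ^ k) * ((-1) ^ k) = 1 := by rw [← mul_pow]; norm_num
    linear_combination (-2 : ℤ) * useq n hn x (s + k + 1 + 1) * hA


lemma useq_def (t : ℕ) : useq n hn x t = (twist n)^[t] x ⟨n - 1, Nat.sub_lt hn one_pos⟩ := rfl

lemma urec (hne : Even n) (s : ℕ) :
    useq n hn x (s + n + 1) =
      -(useq n hn x (s + 1)
        - 2 * ∑ j ∈ Finset.range (n-1), (-1) ^ j * useq n hn x (s + 2 + j)) := by
  have h := lemU n hn x (n - 1) (by omega) s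
  rw [show s + (n - 1) + 1 = s + n from by omega] at h
  rw [show (⟨n - 1 - (n - 1), by omega⟩ : Fin n) = ⟨0, hn⟩ from Fin.ext (show n - 1 - (n - 1) = 0 by omega)] at h
  rw [iter_zero] at h
  have hodd : Odd (n - 1) := Nat.Even.sub_odd hn hne odd_one
  rw [hodd.neg_one_pow] at h
  linarith

-- vrec in v language
lemma vrec (hne : Even n) (s : ℕ) :
    vseq n hn x (s + n + 1) + vseq n hn x (s + 1)
      + 2 * ∑ j ∈ Finset.range (n-1), vseq n hn x (s + 2 + j) = 0 := by
  have h := urec n hn x hne s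
  have hsum : ∑ j ∈ Finset.range (n-1), (-1:ℤ) ^ j * useq n hn x (s + 2 + j)
      = (-1) ^ s * ∑ j ∈ Finset.range (n-1), vseq n hn x (s + 2 + j) := by
    rw [Finset.mul_sum]
    refine Finset.sum_congr rfl fun j _ => ?_
    rw [uv n hn x (s + 2 + j)]
    have hA : ((-1:ℤ) ^ j) * ((-1) ^ j) = 1 := by rw [← mul_pow]; norm_num
    have hs2 : ((-1:ℤ) ^ (s + 2 + j)) = (-1) ^ s * (-1) ^ j := by
      rw [pow_add, pow_add]; ring_nf
    rw [hs2]
    linear_combination ((-1:ℤ) ^ s * vseq n hn x (s + 2 + j)) * hA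
  rw [hsum] at h
  have e1 : useq n hn x (s + n + 1) = (-1) ^ (s + n + 1) * vseq n hn x (s + n + 1) := uv ..
  have e2 : useq n hn x (s + 1) = (-1) ^ (s + 1) * vseq n hn x (s + 1) := uv ..
  rw [e1, e2] at h
  have hsn : ((-1:ℤ)) ^ (s + n + 1) = -(-1) ^ s := by
    rw [pow_add, pow_add, hne.neg_one_pow]; ring
  have hs1 : ((-1:ℤ)) ^ (s + 1) = -(-1) ^ s := by rw [pow_add]; ring
  rw [hsn, hs1] at h
  have hA2 : ((-1:ℤ)) ^ (s * 2) = 1 := by rw [mul_comm, pow_mul]; norm_num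
  linear_combination (-(-1:ℤ) ^ s) * h - (vseq n hn x (s + n + 1) + vseq n hn x (s + 1)
    + 2 * ∑ j ∈ Finset.range (n-1), vseq n hn x (s + 2 + j)) * hA2
end useq

lemma peel_first (f : ℕ → ℤ) (L c : ℕ) (hL : 0 < L) :
    ∑ j ∈ Finset.range L, f (c + j) = f c + ∑ j ∈ Finset.range (L - 1), f (c + 1 + j) := by
  obtain ⟨L', rfl⟩ : ∃ L', L = L' + 1 := ⟨L - 1, by omega⟩
  rw [Nat.add_sub_cancel, Finset.sum_range_succ', add_comm, add_zero]
  congr 1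
  exact Finset.sum_congr rfl fun j _ => congrArg f (by omega)

lemma peel_last (f : ℕ → ℤ) (L c : ℕ) (hL : 0 < L) :
    ∑ j ∈ Finset.range L, f (c + j) = (∑ j ∈ Finset.range (L - 1), f (c + j)) + f (c + (L - 1)) := by
  obtain ⟨L', rfl⟩ : ∃ L', L = L' + 1 := ⟨L - 1, by omega⟩
  rw [Nat.add_sub_cancel]
  exact Finset.sum_range_succ _ _

lemma blocks_eq (n Q R m : ℕ) (hQR : n = Q * R) (hQ : 0 < Q) (hR2 : 2 ≤ R) (hRe : Even R)
    (hmn : n ≤ m) (hm0 : 0 < m) (hme : Even m)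
    (hbez : ∃ k1 k2 : ℕ, R + k1 * n = k2 * m)
    (x : Fin n → ℤ) (hx : (twist n)^[m] x = x)
    (i : ℕ) (h : i + R < n) :
    x ⟨i + R, h⟩ = x ⟨i, by omega⟩ := by
  have hn : 0 < n := by rw [hQR]; exact Nat.mul_pos hQ (by omega)
  have hne : Even n := by rw [hQR]; exact hRe.mul_left Q
  have hRn : R ≤ n := by rw [hQR]; exact Nat.le_mul_of_pos_left R hQ
  -- rebase helpers
  have vreb : ∀ c c' : ℕ, c = c' → vseq n hn x c = vseq n hn x c' := fun c c' hcc => by rw [hcc]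
  have ureb : ∀ c c' : ℕ, c = c' → useq n hn x c = useq n hn x c' := fun c c' hcc => by rw [hcc]
  have sreb : ∀ (k c c' : ℕ), c = c' →
      (∑ j ∈ Finset.range k, vseq n hn x (c + j)) = ∑ j ∈ Finset.range k, vseq n hn x (c' + j) :=
    fun k c c' hcc => by rw [hcc]
  -- periodicity
  have huper : ∀ t, useq n hn x (t + m) = useq n hn x t := by
    intro t
    rw [useq_def, useq_def, Function.iterate_add_apply, hx]
  have vu : ∀ t, vseq n hn x t = (-1) ^ t * useq n hn x t := fun t => by
    rw [uv n hn x t, ← mul_assoc, ← mul_pow]; norm_num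
  have hvper : ∀ t, vseq n hn x (t + m) = vseq n hn x t := by
    intro t
    rw [vu (t + m), vu t, huper, pow_add, hme.neg_one_pow, mul_one]
  have hvmk : ∀ k t, vseq n hn x (t + k * m) = vseq n hn x t := by
    intro k
    induction k with
    | zero => intro t; exact vreb _ _ (by omega)
    | succ k ih =>
      intro t
      rw [vreb _ ((t + k * m) + m) (by ring), hvper, ih]
  -- window recurrence
  have hWrec : ∀ s, (∑ j ∈ Finset.range n, vseq n hn x (s + 2 + j))
      = -(∑ j ∈ Finset.range n, vseq n hn x (s + 1 + j)) := by
    intro s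
    have h1 := peel_first (vseq n hn x) n (s + 1) hn
    rw [sreb _ (s + 1 + 1) (s + 2) (by omega)] at h1
    have h2 := peel_last (vseq n hn x) n (s + 2) hn
    rw [vreb (s + 2 + (n - 1)) (s + n + 1) (by omega)] at h2
    have h3 := vrec n hn x hne s
    linarith
  have hWalt : ∀ s, (∑ j ∈ Finset.range n, vseq n hn x (s + 1 + j))
      = (-1) ^ s * ∑ j ∈ Finset.range n, vseq n hn x (1 + j) := by
    intro s
    induction s with
    | zero => rw [sreb _ (0 + 1) 1 (by omega)]; ring
    | succ s ih =>
      rw [sreb _ (s + 1 + 1) (s + 2) (by omega), hWrec s, ih, pow_succ]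
      ring
  set c := ∑ j ∈ Finset.range n, vseq n hn x (1 + j) with hcdef
  have hvdiff : ∀ s, vseq n hn x (s + 1 + n) - vseq n hn x (s + 1)
      = (-1) ^ (s + 1) * c - (-1) ^ s * c := by
    intro s
    have h1 := peel_first (vseq n hn x) n (s + 1) hn
    rw [sreb _ (s + 1 + 1) (s + 2) (by omega)] at h1
    have h2 := peel_last (vseq n hn x) n (s + 2) hn
    rw [vreb (s + 2 + (n - 1)) (s + 1 + n) (by omega)] at h2
    have h3 := hWalt s
    have h4 := hWalt (s + 1)
    rw [sreb _ (s + 1 + 1) (s + 2) (by omega)] at h4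
    linarith
  have hvnk : ∀ k : ℕ, vseq n hn x (1 + k * n) = vseq n hn x 1 - 2 * (k : ℤ) * c := by
    intro k
    induction k with
    | zero => simp
    | succ k ih =>
      have hkn : Even (k * n) := hne.mul_left k
      have h1 := hvdiff (k * n)
      rw [hkn.neg_one_pow, pow_succ, hkn.neg_one_pow] at h1
      rw [vreb (1 + (k + 1) * n) (k * n + 1 + n) (by ring)]
      rw [vreb (k * n + 1) (1 + k * n) (by omega), ih] at h1
      push_cast
      linarith
  have hceq : c = 0 := by
    have h1 := hvnk m
    have h2 : vseq n hn x (1 + m * n) = vseq n hn x 1 := by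
      rw [vreb (1 + m * n) (1 + n * m) (by ring)]; exact hvmk n 1
    have h3 : 2 * (m : ℤ) * c = 0 := by linarith
    rcases mul_eq_zero.mp h3 with h4 | h4
    · exfalso
      have hh : (0:ℤ) < m := by exact_mod_cast hm0
      linarith
    · exact h4
  have hvn0 : ∀ s, vseq n hn x (s + 1 + n) = vseq n hn x (s + 1) := by
    intro s
    have hh := hvdiff s
    rw [hceq] at hh
    simp at hh
    linarith
  have hW0 : ∀ s, (∑ j ∈ Finset.range n, vseq n hn x (s + 1 + j)) = 0 := by
    intro s
    rw [hWalt s, hceq, mul_zero]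
  have hvnk0 : ∀ k s, vseq n hn x (s + 1 + k * n) = vseq n hn x (s + 1) := by
    intro k
    induction k with
    | zero => intro s; exact vreb _ _ (by omega)
    | succ k ih =>
      intro s
      rw [vreb (s + 1 + (k + 1) * n) ((s + k * n) + 1 + n) (by ring), hvn0 (s + k * n),
        vreb ((s + k * n) + 1) (s + 1 + k * n) (by omega), ih]
  have hvR : ∀ s, vseq n hn x (s + 1 + R) = vseq n hn x (s + 1) := by
    obtain ⟨k1, k2, hb⟩ := hbez
    have hb' : R + k1 * n = k2 * m := hb
    intro s
    have e2 : (s + R) + 1 + k1 * n = s + 1 + k2 * m := by rw [← hb']; ring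
    calc vseq n hn x (s + 1 + R) = vseq n hn x ((s + R) + 1) := vreb _ _ (by omega)
      _ = vseq n hn x ((s + R) + 1 + k1 * n) := (hvnk0 k1 (s + R)).symm
      _ = vseq n hn x (s + 1 + k2 * m) := vreb _ _ e2
      _ = vseq n hn x (s + 1) := hvmk k2 (s + 1)
  have huR : ∀ s, useq n hn x (s + 1 + R) = useq n hn x (s + 1) := by
    intro s
    rw [uv n hn x (s + 1 + R), uv n hn x (s + 1), hvR, pow_add, hRe.neg_one_pow, mul_one]
  have hvRk : ∀ k s, vseq n hn x (s + 1 + k * R) = vseq n hn x (s + 1) := by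
    intro k
    induction k with
    | zero => intro s; exact vreb _ _ (by omega)
    | succ k ih =>
      intro s
      rw [vreb (s + 1 + (k + 1) * R) ((s + k * R) + 1 + R) (by ring), hvR (s + k * R),
        vreb ((s + k * R) + 1) (s + 1 + k * R) (by omega), ih]
  have hWR : ∀ s, (∑ j ∈ Finset.range R, vseq n hn x (s + 1 + j)) = 0 := by
    intro s
    have key : ∀ Qk : ℕ, (∑ j ∈ Finset.range (Qk * R), vseq n hn x (s + 1 + j))
        = (Qk : ℤ) * ∑ j ∈ Finset.range R, vseq n hn x (s + 1 + j) := by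
      intro Qk
      induction Qk with
      | zero => simp
      | succ Qk ih =>
        rw [show (Qk + 1) * R = Qk * R + R from by ring, Finset.sum_range_add, ih]
        have e3 : (∑ j ∈ Finset.range R, vseq n hn x (s + 1 + (Qk * R + j)))
            = ∑ j ∈ Finset.range R, vseq n hn x (s + 1 + j) := by
          refine Finset.sum_congr rfl fun j _ => ?_
          calc vseq n hn x (s + 1 + (Qk * R + j)) = vseq n hn x ((s + j) + 1 + Qk * R) :=
                vreb _ _ (by ring)
            _ = vseq n hn x ((s + j) + 1) := hvRk Qk (s + j)
            _ = vseq n hn x (s + 1 + j) := vreb _ _ (by omega)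
        rw [e3]
        push_cast
        ring
    have h5 := hW0 s
    rw [show Finset.range n = Finset.range (Q * R) from by rw [hQR], key Q] at h5
    rcases mul_eq_zero.mp h5 with h6 | h6
    · exfalso
      have : (0:ℤ) < Q := by exact_mod_cast hQ
      linarith
    · exact h6
  -- the coordinate computation
  have hx' : ∀ ii : Fin n, x ii = (twist n)^[m] x ii := fun ii => (congrFun hx ii).symm
  have hi : i < n := by omega
  obtain ⟨kk, hkkdef⟩ : ∃ kk, kk = n - 1 - i := ⟨_, rfl⟩
  obtain ⟨ss, hssdef⟩ : ∃ ss, ss = m - n + i := ⟨_, rfl⟩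
  have hkk : kk < n := by omega
  have hkkR : R ≤ kk := by omega
  have e : ss + kk + 1 = m := by omega
  have hXi : x ⟨i, by omega⟩ = (-1) ^ kk * (useq n hn x (ss + 1)
      - 2 * ∑ j ∈ Finset.range kk, (-1) ^ j * useq n hn x (ss + 2 + j)) := by
    have hu := lemU n hn x kk hkk ss
    have hxe : x = (twist n)^[ss + kk + 1] x := by rw [e]; exact hx.symm
    have hfin : (⟨i, by omega⟩ : Fin n) = ⟨n - 1 - kk, by omega⟩ :=
      Fin.ext (show i = n - 1 - kk by omega)
    calc x ⟨i, by omega⟩ = (twist n)^[ss + kk + 1] x ⟨i, by omega⟩ := congrFun hxe _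
      _ = (twist n)^[ss + kk + 1] x ⟨n - 1 - kk, by omega⟩ := congrArg _ hfin
      _ = _ := hu
  have e' : (ss + R) + (kk - R) + 1 = m := by omega
  have hXiR : x ⟨i + R, h⟩ = (-1) ^ (kk - R) * (useq n hn x ((ss + R) + 1)
      - 2 * ∑ j ∈ Finset.range (kk - R), (-1) ^ j * useq n hn x ((ss + R) + 2 + j)) := by
    have hu := lemU n hn x (kk - R) (by omega) (ss + R)
    have hxe : x = (twist n)^[(ss + R) + (kk - R) + 1] x := by rw [e']; exact hx.symm
    have hfin : (⟨i + R, h⟩ : Fin n) = ⟨n - 1 - (kk - R), by omega⟩ :=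
      Fin.ext (show i + R = n - 1 - (kk - R) by omega)
    calc x ⟨i + R, h⟩ = (twist n)^[(ss + R) + (kk - R) + 1] x ⟨i + R, h⟩ := congrFun hxe _
      _ = (twist n)^[(ss + R) + (kk - R) + 1] x ⟨n - 1 - (kk - R), by omega⟩ := congrArg _ hfin
      _ = _ := hu
  rw [hXi, hXiR]
  -- transform
  have ha : ((-1 : ℤ)) ^ kk = (-1) ^ (kk - R) := by
    rw [show kk = (kk - R) + R from by omega, pow_add, hRe.neg_one_pow, mul_one]
    rw [show (kk - R) + R - R = kk - R from by omega]
  have hb1 : useq n hn x ((ss + R) + 1) = useq n hn x (ss + 1) := by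
    rw [ureb ((ss + R) + 1) (ss + 1 + R) (by omega), huR]
  have hsplit : (∑ j ∈ Finset.range kk, (-1 : ℤ) ^ j * useq n hn x (ss + 2 + j))
      = (∑ j ∈ Finset.range (kk - R), (-1 : ℤ) ^ j * useq n hn x (ss + 2 + j))
        + ∑ j ∈ Finset.range R, (-1 : ℤ) ^ ((kk - R) + j) * useq n hn x (ss + 2 + ((kk - R) + j)) := by
    rw [show kk = (kk - R) + R from by omega]
    rw [show (kk - R) + R - R = kk - R from by omega]
    exact Finset.sum_range_add _ _ _
  have hzero : (∑ j ∈ Finset.range R, (-1 : ℤ) ^ ((kk - R) + j) * useq n hn x (ss + 2 + ((kk - R) + j))) = 0 := by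
    have hterm : ∀ j : ℕ, (-1 : ℤ) ^ ((kk - R) + j) * useq n hn x (ss + 2 + ((kk - R) + j))
        = (-1) ^ ss * vseq n hn x ((ss + 1 + (kk - R)) + 1 + j) := by
      intro j
      rw [uv n hn x (ss + 2 + ((kk - R) + j)), ← mul_assoc, ← pow_add]
      rw [show ((kk - R) + j) + (ss + 2 + ((kk - R) + j)) = ss + 2 * ((kk - R) + j + 1) from by ring]
      rw [pow_add, pow_mul]
      rw [vreb (ss + 2 + ((kk - R) + j)) ((ss + 1 + (kk - R)) + 1 + j) (by ring)]
      norm_num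
    calc (∑ j ∈ Finset.range R, (-1 : ℤ) ^ ((kk - R) + j) * useq n hn x (ss + 2 + ((kk - R) + j)))
        = ∑ j ∈ Finset.range R, (-1 : ℤ) ^ ss * vseq n hn x ((ss + 1 + (kk - R)) + 1 + j) :=
          Finset.sum_congr rfl fun j _ => hterm j
      _ = (-1 : ℤ) ^ ss * ∑ j ∈ Finset.range R, vseq n hn x ((ss + 1 + (kk - R)) + 1 + j) := by
          rw [Finset.mul_sum]
      _ = 0 := by rw [hWR (ss + 1 + (kk - R)), mul_zero]
  have hfirst : (∑ j ∈ Finset.range (kk - R), (-1 : ℤ) ^ j * useq n hn x ((ss + R) + 2 + j))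
      = ∑ j ∈ Finset.range (kk - R), (-1 : ℤ) ^ j * useq n hn x (ss + 2 + j) := by
    refine Finset.sum_congr rfl fun j _ => ?_
    congr 1
    calc useq n hn x ((ss + R) + 2 + j) = useq n hn x ((ss + 1 + j) + 1 + R) := ureb _ _ (by ring)
      _ = useq n hn x ((ss + 1 + j) + 1) := huR (ss + 1 + j)
      _ = useq n hn x (ss + 2 + j) := ureb _ _ (by ring)
  rw [hfirst, hb1, hsplit, hzero, add_zero, ha]

/-- the induced map on (R-periodic) block sequences -/
def phi (R : ℕ) (a : ℕ → ℤ) : ℕ → ℤ := fun t => 2 * a 0 - a ((t + 1) % R)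

/-- the alternating block sum, in paired form -/
def Dsum (R : ℕ) (a : ℕ → ℤ) : ℤ :=
  ∑ j ∈ Finset.range (R / 2), (a ((2 * j) % R) - a ((2 * j + 1) % R))

lemma phi_mod (R : ℕ) (a : ℕ → ℤ) (t : ℕ) : phi R a (t % R) = phi R a t := by
  unfold phi
  rw [Nat.mod_add_mod]

lemma phi_iter_mod (R k : ℕ) (hk : 0 < k) (a : ℕ → ℤ) (t : ℕ) :
    (phi R)^[k] a (t % R) = (phi R)^[k] a t := by
  obtain ⟨k', rfl⟩ : ∃ k', k = k' + 1 := ⟨k - 1, by omega⟩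
  rw [Function.iterate_succ_apply']
  exact phi_mod R _ t

lemma twist_EB (n Q R : ℕ) (hQR : n = Q * R) (hQ : 0 < Q) (hR : 0 < R)
    (x : Fin n → ℤ) (a : ℕ → ℤ) (h : ∀ i : Fin n, x i = a ((i : ℕ) % R)) :
    ∀ i : Fin n, twist n x i = phi R a ((i : ℕ) % R) := by
  intro i
  have hn : 0 < n := by rw [hQR]; exact Nat.mul_pos hQ hR
  by_cases hlt : (i : ℕ) + 1 < n
  · rw [twist, dif_pos hlt, h ⟨0, i.pos⟩, h ⟨(i : ℕ) + 1, hlt⟩, phi, Nat.mod_add_mod]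
    norm_num
  · have hi : (i : ℕ) = n - 1 := by have := i.2; omega
    rw [twist, dif_neg hlt, h ⟨0, i.pos⟩, phi, Nat.mod_add_mod]
    have h1 : ((i : ℕ) + 1) % R = 0 := by
      rw [hi, show n - 1 + 1 = n from by omega, hQR, Nat.mul_comm, Nat.mul_mod_right]
    rw [h1, Nat.zero_mod]
    ring

lemma EB_iter (n Q R : ℕ) (hQR : n = Q * R) (hQ : 0 < Q) (hR : 0 < R)
    (x : Fin n → ℤ) (a : ℕ → ℤ) (h : ∀ i : Fin n, x i = a ((i : ℕ) % R)) :
    ∀ (k : ℕ) (i : Fin n), (twist n)^[k] x i = (phi R)^[k] a ((i : ℕ) % R) := by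
  intro k
  induction k with
  | zero => exact h
  | succ k ih =>
    intro i
    rw [Function.iterate_succ_apply', Function.iterate_succ_apply']
    exact twist_EB n Q R hQR hQ hR _ _ ih i

lemma phi_two (R : ℕ) (hR2 : 2 ≤ R) (a : ℕ → ℤ) (t : ℕ) :
    (phi R)^[2] a t = 2 * a 0 - 2 * a 1 + a ((t + 2) % R) := by
  show phi R (phi R a) t = _
  rw [phi, phi, phi, Nat.mod_add_mod]
  rw [show (0 + 1) % R = 1 from by rw [Nat.zero_add]; exact Nat.mod_eq_of_lt hR2]
  ring

lemma phi_two_k (R : ℕ) (hR2 : 2 ≤ R) (a : ℕ → ℤ) (ha : ∀ t, a t = a (t % R)) (k : ℕ) :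
    ∀ t, (phi R)^[2 * k] a t = a ((t + 2 * k) % R)
      + 2 * ∑ j ∈ Finset.range k, (a ((2 * j) % R) - a ((2 * j + 1) % R)) := by
  induction k with
  | zero =>
    intro t
    simp only [Nat.mul_zero, Function.iterate_zero, id_eq, Finset.range_zero,
      Finset.sum_empty, Nat.add_zero, mul_zero, add_zero]
    exact ha t
  | succ k ih =>
    intro t
    rw [show 2 * (k + 1) = 2 + 2 * k from by ring, Function.iterate_add_apply]
    rw [phi_two R hR2 _ t, ih 0, ih 1, ih ((t + 2) % R), Finset.sum_range_succ]
    rw [Nat.mod_add_mod]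
    rw [show (0 + 2 * k) % R = (2 * k) % R from by rw [Nat.zero_add]]
    rw [show (1 + 2 * k) % R = (2 * k + 1) % R from by rw [Nat.add_comm]]
    rw [show (t + 2 + 2 * k) % R = (t + (2 + 2 * k)) % R from by congr 1; ring]
    set S := ∑ j ∈ Finset.range k, (a ((2 * j) % R) - a ((2 * j + 1) % R)) with hS
    ring

lemma phi_R_pow (R : ℕ) (hR2 : 2 ≤ R) (hRe : Even R) (a : ℕ → ℤ)
    (ha : ∀ t, a t = a (t % R)) (t : ℕ) :
    (phi R)^[R] a t = a (t % R) + 2 * Dsum R a := by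
  have h := phi_two_k R hR2 a ha (R / 2) t
  obtain ⟨K, hK⟩ := hRe
  have h2 : 2 * (R / 2) = R := by omega
  rw [h2] at h
  rw [Nat.add_mod_right] at h
  exact h

lemma phi_R_iter (R : ℕ) (hR2 : 2 ≤ R) (hRe : Even R) (a : ℕ → ℤ)
    (ha : ∀ t, a t = a (t % R)) (k : ℕ) :
    ∀ t, (phi R)^[R * k] a t = a (t % R) + 2 * (k : ℤ) * Dsum R a := by
  induction k with
  | zero =>
    intro t
    simp only [Nat.mul_zero, Function.iterate_zero, id_eq, Nat.cast_zero]
    rw [← ha t]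
    ring
  | succ k ih =>
    intro t
    rw [show R * (k + 1) = R + R * k from by ring, Function.iterate_add_apply]
    have hb : ∀ s, (phi R)^[R * k] a s = (phi R)^[R * k] a (s % R) := by
      intro s
      rcases Nat.eq_zero_or_pos (R * k) with h0 | h0
      · rw [h0]; exact ha s
      · exact (phi_iter_mod R (R * k) h0 a s).symm
    rw [phi_R_pow R hR2 hRe _ (fun s => hb s) t]
    have hDb : Dsum R ((phi R)^[R * k] a) = Dsum R a := by
      unfold Dsum
      refine Finset.sum_congr rfl fun j _ => ?_
      rw [ih ((2 * j) % R), ih ((2 * j + 1) % R), Nat.mod_mod_of_dvd _ dvd_rfl,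
        Nat.mod_mod_of_dvd _ dvd_rfl]
      ring
    rw [hDb, ih (t % R), Nat.mod_mod_of_dvd _ dvd_rfl]
    push_cast
    ring

lemma alt_sum (a : ℕ → ℤ) (K : ℕ) :
    ∑ i ∈ Finset.range (2 * K), (-1 : ℤ) ^ i * a i
      = ∑ j ∈ Finset.range K, (a (2 * j) - a (2 * j + 1)) := by
  induction K with
  | zero => simp
  | succ K ih =>
    rw [show 2 * (K + 1) = (2 * K + 1) + 1 from by ring, Finset.sum_range_succ,
      Finset.sum_range_succ, Finset.sum_range_succ, ih]
    rw [(even_two_mul K).neg_one_pow, (even_two_mul K).add_one.neg_one_pow]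
    ring

lemma delta_eq_Dsum (R : ℕ) (hR2 : 2 ≤ R) (hRe : Even R) (A : Fin R → ℤ) (a : ℕ → ℤ)
    (hAm : ∀ (t : ℕ) (ht : t < R), a t = A ⟨t, ht⟩) :
    delta R A = Dsum R a := by
  have h1 : delta R A = ∑ i ∈ Finset.range R, (-1 : ℤ) ^ i * a i := by
    rw [delta, ← Fin.sum_univ_eq_sum_range (fun t => (-1 : ℤ) ^ t * a t) R]
    refine Finset.sum_congr rfl fun i _ => ?_
    rw [hAm i.1 i.2]
  have h2 := alt_sum a (R / 2)
  obtain ⟨K, hK⟩ := hRe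
  rw [show 2 * (R / 2) = R from by omega] at h2
  rw [h1, h2, Dsum]
  refine Finset.sum_congr rfl fun j hj => ?_
  have hjR : j < R / 2 := Finset.mem_range.mp hj
  rw [Nat.mod_eq_of_lt (show 2 * j < R by omega), Nat.mod_eq_of_lt (show 2 * j + 1 < R by omega)]

theorem stmt_5 (p q r : ℤ) (hp : p ≠ 0) (hgcd : Int.gcd p q = 1)
    (hq1 : 1 ≤ q) (hqp : q ≤ |p|) (hr2 : 2 ≤ r) (hre : Even r)
    (Q R m : ℕ) (hQ : (Q : ℤ) = q) (hR : (R : ℤ) = r) (hm : (m : ℤ) = |p| * r)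
    (x : Fin (Q * R) → ℤ) :
    (twist (Q * R))^[m] x = x ↔
      ∃ a : Fin R → ℤ, delta R a = 0 ∧ ∀ (j : Fin Q) (i : Fin R), blk Q R x j i = a i := by
  -- numeric setup
  have hQ0 : 0 < Q := by
    have h1 : (1 : ℤ) ≤ (Q : ℤ) := by rw [hQ]; exact hq1
    exact_mod_cast h1
  have hR2' : 2 ≤ R := by
    have h1 : (2 : ℤ) ≤ (R : ℤ) := by rw [hR]; exact hr2
    exact_mod_cast h1
  have hRe' : Even R := by
    have h1 : Even ((R : ℤ)) := by rw [hR]; exact hre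
    exact_mod_cast h1
  set P := p.natAbs with hPdef
  have hPz : (P : ℤ) = |p| := (Int.abs_eq_natAbs p).symm
  have hP1 : 1 ≤ P := Int.natAbs_pos.mpr hp
  have hmPR : m = P * R := by
    have h1 : (m : ℤ) = ((P * R : ℕ) : ℤ) := by push_cast; rw [hm, hPz, hR]
    exact_mod_cast h1
  have hQP : Q ≤ P := by
    have h1 : (Q : ℤ) ≤ (P : ℤ) := by rw [hQ, hPz]; exact hqp
    exact_mod_cast h1
  have hmn : Q * R ≤ m := by rw [hmPR]; exact Nat.mul_le_mul_right R hQP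
  have hm0 : 0 < m := by rw [hmPR]; exact Nat.mul_pos (by omega) (by omega)
  have hme : Even m := by rw [hmPR]; exact hRe'.mul_left P
  have hcop : Nat.Coprime P Q := by
    have h1 : q.natAbs = Q := by rw [← hQ]; exact Int.natAbs_natCast Q
    have h2 : Nat.gcd P Q = 1 := by rw [hPdef, ← h1]; exact hgcd
    exact h2
  have hbez : ∃ k1 k2 : ℕ, R + k1 * (Q * R) = k2 * m := by
    rcases Nat.lt_or_ge 1 Q with hQ1 | hQ1
    · obtain ⟨w, -, hw⟩ := Nat.exists_mul_mod_eq_one_of_coprime hcop hQ1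
      have hmod := Nat.div_add_mod (P * w) Q
      rw [hw] at hmod
      refine ⟨P * w / Q, w, ?_⟩
      calc R + (P * w / Q) * (Q * R) = (Q * (P * w / Q) + 1) * R := by ring
        _ = (P * w) * R := by rw [hmod]
        _ = w * m := by rw [hmPR]; ring
    · have hQ1' : Q = 1 := by omega
      refine ⟨P - 1, 1, ?_⟩
      have hPm : P - 1 + 1 = P := by omega
      calc R + (P - 1) * (Q * R) = R + (P - 1) * R := by rw [hQ1', Nat.one_mul]
        _ = (P - 1 + 1) * R := by ring
        _ = P * R := by rw [hPm]
        _ = 1 * m := by rw [hmPR, Nat.one_mul]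
  have hR0 : 0 < R := by omega
  have hRn : R ≤ Q * R := Nat.le_mul_of_pos_left R hQ0
  have hQR0 : 0 < Q * R := Nat.mul_pos hQ0 hR0
  constructor
  · -- forward direction
    intro hx
    have hstep : ∀ (i : ℕ) (h : i + R < Q * R), x ⟨i + R, h⟩ = x ⟨i, by omega⟩ :=
      fun i h => blocks_eq (Q * R) Q R m rfl hQ0 hR2' hRe' hmn hm0 hme hbez x hx i h
    have key : ∀ (t : ℕ) (ht : t < Q * R),
        x ⟨t, ht⟩ = x ⟨t % R, lt_of_lt_of_le (Nat.mod_lt t hR0) hRn⟩ := by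
      intro t
      induction t using Nat.strong_induction_on with
      | _ t ih =>
        intro ht
        by_cases hlt : t < R
        · exact congrArg x (Fin.ext (Nat.mod_eq_of_lt hlt).symm)
        · have h1 : (t - R) + R < Q * R := by omega
          have e1 : x ⟨t, ht⟩ = x ⟨(t - R) + R, h1⟩ := congrArg x (Fin.ext (show t = (t - R) + R by omega))
          have e2 := hstep (t - R) h1
          have e3 := ih (t - R) (by omega) (by omega)
          have e4 : (t - R) % R = t % R := by
            conv_rhs => rw [show t = (t - R) + R from by omega]
            rw [Nat.add_mod_right]
          rw [e1, e2, e3]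
          exact congrArg x (Fin.ext e4)
    set A : Fin R → ℤ := fun i0 => x ⟨i0.1, lt_of_lt_of_le i0.2 hRn⟩ with hAdef
    set amap : ℕ → ℤ := fun t => A ⟨t % R, Nat.mod_lt t hR0⟩ with hamap
    have hAm : ∀ (t : ℕ) (ht : t < R), amap t = A ⟨t, ht⟩ := by
      intro t ht
      exact congrArg A (Fin.ext (Nat.mod_eq_of_lt ht))
    have ha : ∀ t, amap t = amap (t % R) := by
      intro t
      exact congrArg A (Fin.ext (Nat.mod_mod_of_dvd t dvd_rfl).symm)
    have hEB : ∀ ii : Fin (Q * R), x ii = amap (ii.1 % R) := by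
      intro ii
      calc x ii = x ⟨ii.1, ii.2⟩ := congrArg x (Fin.ext rfl)
        _ = x ⟨ii.1 % R, lt_of_lt_of_le (Nat.mod_lt ii.1 hR0) hRn⟩ := key ii.1 ii.2
        _ = A ⟨ii.1 % R, Nat.mod_lt ii.1 hR0⟩ := rfl
        _ = amap (ii.1 % R) := (hAm (ii.1 % R) (Nat.mod_lt ii.1 hR0)).symm
    have hphi : ∀ ii : Fin (Q * R), x ii = (phi R)^[m] amap (ii.1 % R) := by
      intro ii
      have h1 := EB_iter (Q * R) Q R rfl hQ0 hR0 x amap hEB m ii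
      rw [hx] at h1
      exact h1
    have hiter := phi_R_iter R hR2' hRe' amap ha P ((0 : ℕ) % R)
    rw [show R * P = m from by rw [hmPR]; ring] at hiter
    have hchain : amap ((0 : ℕ) % R % R) + 2 * (P : ℤ) * Dsum R amap = amap ((0 : ℕ) % R % R) := by
      calc amap ((0 : ℕ) % R % R) + 2 * (P : ℤ) * Dsum R amap
          = (phi R)^[m] amap ((0 : ℕ) % R) := hiter.symm
        _ = x ⟨0, hQR0⟩ := (hphi ⟨0, hQR0⟩).symm
        _ = amap ((0 : ℕ) % R) := hEB ⟨0, hQR0⟩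
        _ = amap ((0 : ℕ) % R % R) := ha ((0 : ℕ) % R)
    have h2PD : 2 * (P : ℤ) * Dsum R amap = 0 := by linarith
    have hDz : Dsum R amap = 0 := by
      rcases mul_eq_zero.mp h2PD with h4 | h4
      · exfalso
        have : (1 : ℤ) ≤ (P : ℤ) := by exact_mod_cast hP1
        linarith
      · exact h4
    refine ⟨A, ?_, ?_⟩
    · rw [delta_eq_Dsum R hR2' hRe' A amap hAm]
      exact hDz
    · intro j i0
      calc blk Q R x j i0 = x ⟨j.1 * R + i0.1, by
            calc (j : ℕ) * R + (i0 : ℕ) < (j : ℕ) * R + R := Nat.add_lt_add_left i0.2 _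
              _ = ((j : ℕ) + 1) * R := (Nat.succ_mul _ _).symm
              _ ≤ Q * R := Nat.mul_le_mul_right R j.2⟩ := rfl
        _ = amap ((j.1 * R + i0.1) % R) := hEB _
        _ = amap i0.1 := congrArg amap
            (by rw [Nat.add_comm, Nat.add_mul_mod_self_right, Nat.mod_eq_of_lt i0.2])
        _ = A ⟨i0.1, i0.2⟩ := hAm i0.1 i0.2
        _ = A i0 := congrArg A (Fin.ext rfl)
  · -- reverse direction
    rintro ⟨A, hdelta, hblk⟩
    set amap : ℕ → ℤ := fun t => A ⟨t % R, Nat.mod_lt t hR0⟩ with hamap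
    have hAm : ∀ (t : ℕ) (ht : t < R), amap t = A ⟨t, ht⟩ := by
      intro t ht
      exact congrArg A (Fin.ext (Nat.mod_eq_of_lt ht))
    have ha : ∀ t, amap t = amap (t % R) := by
      intro t
      exact congrArg A (Fin.ext (Nat.mod_mod_of_dvd t dvd_rfl).symm)
    have hEB : ∀ ii : Fin (Q * R), x ii = amap (ii.1 % R) := by
      intro ii
      have hdiv : ii.1 / R < Q := (Nat.div_lt_iff_lt_mul hR0).mpr ii.2
      have hv : ii.1 / R * R + ii.1 % R = ii.1 := by
        rw [Nat.mul_comm]; exact Nat.div_add_mod _ _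
      have hblk' := hblk ⟨ii.1 / R, hdiv⟩ ⟨ii.1 % R, Nat.mod_lt ii.1 hR0⟩
      calc x ii = x ⟨ii.1 / R * R + ii.1 % R, by rw [hv]; exact ii.2⟩ :=
            congrArg x (Fin.ext hv.symm)
        _ = A ⟨ii.1 % R, Nat.mod_lt ii.1 hR0⟩ := hblk'
        _ = amap (ii.1 % R) := (hAm (ii.1 % R) (Nat.mod_lt ii.1 hR0)).symm
    have hDz : Dsum R amap = 0 := by
      rw [← delta_eq_Dsum R hR2' hRe' A amap hAm]
      exact hdelta
    funext ii
    have h1 := EB_iter (Q * R) Q R rfl hQ0 hR0 x amap hEB m ii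
    have h2 := phi_R_iter R hR2' hRe' amap ha P (ii.1 % R)
    rw [show R * P = m from by rw [hmPR]; ring] at h2
    calc (twist (Q * R))^[m] x ii = (phi R)^[m] amap (ii.1 % R) := h1
      _ = amap (ii.1 % R % R) + 2 * (P : ℤ) * Dsum R amap := h2
      _ = amap (ii.1 % R) := by rw [hDz, ← ha (ii.1 % R)]; ring
      _ = x ii := (hEB ii).symm
end

section
/- Let p, q, r be integers with p ≠ 0, gcd(p, q) = 1, |p| ≥ q ≥ 1, r ≥ 2, r odd and q even, and set n = qr, m = |p|·r. Write x ∈ ℤ^n as the concatenation of q blocks b_1, …, b_q ∈ ℤ^r (so b_j = (x_{(j−1)r+1}, …, x_{jr})). Then T_n^m(x) = x if and only if b_j = b_1 for every odd index j and b_j = τ(b_1) for every even index j (with b_1 ∈ ℤ^r arbitrary). -/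
/-- `τ(a) = (−a_i + 2Δ(a))_i`. -/
def tau (R : ℕ) (a : Fin R → ℤ) : Fin R → ℤ := fun i => -a i + 2 * delta R a

namespace S7

def per (n : ℕ) (hn : 0 < n) (x : Fin n → ℤ) (k : ℕ) : ℤ := x ⟨k % n, Nat.mod_lt _ hn⟩

lemma per_congr {n : ℕ} (hn : 0 < n) (x : Fin n → ℤ) {k l : ℕ} (h : k % n = l % n) :
    per n hn x k = per n hn x l := by simp [per, h]

lemma per_lt {n : ℕ} (hn : 0 < n) (x : Fin n → ℤ) {k : ℕ} (hk : k < n) :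
    per n hn x k = x ⟨k, hk⟩ := by simp [per, Nat.mod_eq_of_lt hk]

lemma per_add_mul {n : ℕ} (hn : 0 < n) (x : Fin n → ℤ) (k u : ℕ) :
    per n hn x (k + u * n) = per n hn x k := by
  apply per_congr
  simp [Nat.add_mul_mod_self_right]

lemma twist_apply {n : ℕ} (hn : 0 < n) (x : Fin n → ℤ) (i : ℕ) (hi : i < n) :
    twist n x ⟨i, hi⟩ = 2 * x ⟨0, hn⟩ - per n hn x (i + 1) := by
  unfold twist per
  dsimp only
  split_ifs with h
  · simp [Nat.mod_eq_of_lt h]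
  · have he : i + 1 = n := by omega
    simp [he, Nat.mod_self]
    ring

lemma twist_iter {n : ℕ} (hn : 0 < n) (x : Fin n → ℤ) (m : ℕ) :
    ∀ (i : ℕ) (hi : i < n), (twist n)^[m] x ⟨i, hi⟩ =
      (-1) ^ m * per n hn x (i + m)
        + 2 * ∑ k ∈ Finset.range m, (-1) ^ k * per n hn x k := by
  induction m with
  | zero => intro i hi; simp [per_lt hn x hi]
  | succ m ih =>
      intro i hi
      rw [Function.iterate_succ_apply', twist_apply hn _ i hi]
      have h1 : per n hn ((twist n)^[m] x) (i + 1)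
          = (-1) ^ m * per n hn x (i + 1 + m)
            + 2 * ∑ k ∈ Finset.range m, (-1) ^ k * per n hn x k := by
        rw [show per n hn ((twist n)^[m] x) (i + 1)
              = ((twist n)^[m] x) ⟨(i+1) % n, Nat.mod_lt _ hn⟩ from rfl,
            ih ((i+1) % n) (Nat.mod_lt _ hn),
            per_congr hn x (Nat.mod_add_mod (i+1) n m)]
      rw [ih 0 hn, h1]
      rw [per_congr hn x (show (0 + m) % n = m % n by rw [Nat.zero_add]),
          show i + 1 + m = i + (m+1) by omega]
      rw [Finset.sum_range_succ]
      ring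

lemma twist_fixed_iff {n : ℕ} (hn : 0 < n) (x : Fin n → ℤ) (m : ℕ) (hmodd : Odd m) :
    (twist n)^[m] x = x ↔ ∀ (t : ℕ), t < n →
      per n hn x t + per n hn x (t + m)
        = 2 * ∑ k ∈ Finset.range m, (-1) ^ k * per n hn x k := by
  rw [funext_iff]
  constructor
  · intro h t ht
    have h2 := h ⟨t, ht⟩
    rw [twist_iter hn x m t ht, hmodd.neg_one_pow] at h2
    rw [per_lt hn x ht]
    linarith
  · intro h i
    rcases i with ⟨t, ht⟩
    rw [twist_iter hn x m t ht, hmodd.neg_one_pow]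
    have h2 := h t ht
    rw [per_lt hn x ht] at h2
    linarith

lemma sum_range_add (f : ℕ → ℤ) (a b : ℕ) :
    ∑ k ∈ Finset.range (a + b), f k
      = ∑ k ∈ Finset.range a, f k + ∑ i ∈ Finset.range b, f (a + i) := by
  induction b with
  | zero => simp
  | succ b ih =>
      rw [show a + (b+1) = (a+b)+1 from rfl, Finset.sum_range_succ, ih, Finset.sum_range_succ]
      ring

lemma sum_blocks (R : ℕ) (hR : Odd R) (f : ℕ → ℤ) (J : ℕ) :
    ∑ k ∈ Finset.range (J * R), (-1:ℤ)^k * f k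
      = ∑ j ∈ Finset.range J, (-1:ℤ)^j * ∑ i ∈ Finset.range R, (-1:ℤ)^i * f (j * R + i) := by
  induction J with
  | zero => simp
  | succ J ih =>
      rw [Nat.succ_mul, sum_range_add, ih, Finset.sum_range_succ]
      congr 1
      rw [Finset.mul_sum]
      refine Finset.sum_congr rfl fun i _ => ?_
      rw [pow_add, pow_mul', hR.neg_one_pow]
      ring

lemma alt_sum (A B : ℤ) : ∀ u : ℕ,
    ∑ j ∈ Finset.range (2*u+1), (-1:ℤ)^j * (if j % 2 = 0 then A else B)
      = ((u:ℤ)+1) * A - (u:ℤ) * B := by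
  intro u
  induction u with
  | zero => simp
  | succ u ih =>
      rw [show 2*(u+1)+1 = (2*u+1)+1+1 by ring, Finset.sum_range_succ, Finset.sum_range_succ, ih]
      rw [if_neg (by omega), if_pos (by omega)]
      rw [show (-1:ℤ)^(2*u+1) = -1 from Odd.neg_one_pow ⟨u, by ring⟩,
          show (-1:ℤ)^(2*u+1+1) = 1 from Even.neg_one_pow ⟨u+1, by ring⟩]
      push_cast
      ring

lemma iter_step {f : ℕ → ℤ} {s : ℕ} (h : ∀ j, f (j + s) = f j) : ∀ (u j : ℕ), f (j + u * s) = f j := by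
  intro u
  induction u with
  | zero => simp
  | succ u ih => intro j; rw [show j + (u+1)*s = (j + u*s) + s by ring, h, ih]

lemma mul_add_lt {Q R j i : ℕ} (hj : j < Q) (hi : i < R) : j * R + i < Q * R := by
  calc j*R + i < j*R + R := by omega
    _ = (j+1)*R := by ring
    _ ≤ Q*R := Nat.mul_le_mul_right R hj

lemma exists_two (P Q : ℕ) (hP : 0 < P) (hQ : Even Q) (hQ0 : 0 < Q) (hcop : Nat.Coprime P Q) :
    ∃ t s : ℕ, 2 + s * Q = t * (2 * P) := by
  obtain ⟨Q', rfl⟩ := hQ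
  have hQ' : 0 < Q' := by omega
  have hcop' : Nat.Coprime P Q' := Nat.Coprime.coprime_dvd_right ⟨2, by ring⟩ hcop
  haveI : NeZero Q' := ⟨hQ'.ne'⟩
  set t0 := ((P : ZMod Q')⁻¹).val with ht0
  have h1 : ((P * t0 : ℕ) : ZMod Q') = ((1:ℕ) : ZMod Q') := by
    push_cast
    rw [ht0, ZMod.natCast_val, ZMod.cast_id]
    exact ZMod.coe_mul_inv_eq_one P hcop'
  have h2 : P * t0 ≡ 1 [MOD Q'] := (ZMod.natCast_eq_natCast_iff _ _ _).mp h1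
  have h3 : P * (t0 + Q') ≡ 1 [MOD Q'] := by
    calc P * (t0 + Q') = P * t0 + P * Q' := by ring
      _ ≡ P * t0 + 0 [MOD Q'] := Nat.ModEq.add_right_cancel' 0 (by
          simpa using (Nat.ModEq.refl (P * t0)).add (Nat.modEq_zero_iff_dvd.mpr ⟨P, by ring⟩))
      _ = P * t0 := by ring
      _ ≡ 1 [MOD Q'] := h2
  set t := t0 + Q' with htdef
  have ht1 : 1 ≤ P * t := Nat.one_le_iff_ne_zero.mpr (by positivity)
  have h4 : Q' ∣ P * t - 1 := (Nat.modEq_iff_dvd' ht1).mp h3.symm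
  obtain ⟨k, hk⟩ := h4
  refine ⟨t, k, ?_⟩
  have hk' : P * t = 1 + Q' * k := by omega
  rw [show t * (2*P) = 2 * (P * t) by ring, hk']
  ring

end S7

open S7 in
theorem stmt_7 (p q r : ℤ) (hp : p ≠ 0) (hgcd : Int.gcd p q = 1)
    (hq1 : 1 ≤ q) (hqp : q ≤ |p|) (hr2 : 2 ≤ r) (hro : Odd r) (hqe : Even q)
    (Q R m : ℕ) (hQ : (Q : ℤ) = q) (hR : (R : ℤ) = r) (hm : (m : ℤ) = |p| * r)
    (x : Fin (Q * R) → ℤ) :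
    (twist (Q * R))^[m] x = x ↔
      ∃ a : Fin R → ℤ, ∀ (j : Fin Q) (i : Fin R),
        blk Q R x j i = if (j : ℕ) % 2 = 0 then a i else tau R a i := by
  classical
  -- numeric setup
  have hQpos : 0 < Q := by
    have : (0:ℤ) < (Q:ℤ) := by rw [hQ]; omega
    exact_mod_cast this
  have hRpos : 0 < R := by
    have : (0:ℤ) < (R:ℤ) := by rw [hR]; omega
    exact_mod_cast this
  have hn : 0 < Q * R := Nat.mul_pos hQpos hRpos
  set P := p.natAbs with hPdef
  have hPcast : (P : ℤ) = |p| := Int.natCast_natAbs p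
  have hPpos : 0 < P := Int.natAbs_pos.mpr hp
  have hm' : m = P * R := by
    have h1 : (m : ℤ) = ((P * R : ℕ) : ℤ) := by push_cast; rw [hPcast, hR]; exact hm
    exact_mod_cast h1
  have hQnat : Q = q.natAbs := by
    have h1 : (Q:ℤ) = (q.natAbs : ℤ) := by rw [hQ, Int.natAbs_of_nonneg (by omega)]
    exact_mod_cast h1
  have hcop : Nat.Coprime P Q := by rw [hQnat]; exact hgcd
  have hQeven : Even Q := by
    have h1 : Even (Q:ℤ) := by rw [hQ]; exact hqe
    exact_mod_cast h1
  have hRodd : Odd R := by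
    have h1 : Odd (R:ℤ) := by rw [hR]; exact hro
    exact_mod_cast h1
  have hpodd : Odd p := by
    by_contra h
    have hpe : Even p := by rwa [Int.not_odd_iff_even] at h
    obtain ⟨u, v, huv⟩ := Int.isCoprime_iff_gcd_eq_one.mpr hgcd
    have he : Even (u * p + v * q) := (hpe.mul_left u).add (hqe.mul_left v)
    rw [huv] at he
    rw [Int.even_iff] at he
    omega
  have hPodd : Odd P := Int.natAbs_odd.mpr hpodd
  have hmodd : Odd m := by rw [hm']; exact hPodd.mul hRodd
  obtain ⟨u, hu⟩ := hPodd
  -- the constant c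
  set c := 2 * ∑ k ∈ Finset.range m, (-1:ℤ) ^ k * per (Q*R) hn x k with hc
  -- bridge blk ↔ per
  have hblk : ∀ (j : Fin Q) (i : Fin R),
      blk Q R x j i = per (Q*R) hn x ((j:ℕ) * R + (i:ℕ)) := by
    intro j i
    rw [per_lt hn x (mul_add_lt j.2 i.2)]
    rfl
  -- the sum lemma
  have hgeom : ∑ i : Fin R, (-1:ℤ)^(i:ℕ) = 1 := by
    have h1 := neg_one_geom_sum (R := ℤ) (n := R)
    rw [Finset.sum_range] at h1
    rw [h1, if_neg (Nat.not_even_iff_odd.mpr hRodd)]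
  have hsum : ∀ (a : Fin R → ℤ) (e : ℤ),
      (∀ (j i : ℕ) (hi : i < R),
        per (Q*R) hn x (j * R + i) = if j % 2 = 0 then a ⟨i, hi⟩ else e - a ⟨i, hi⟩) →
      ∑ k ∈ Finset.range m, (-1:ℤ)^k * per (Q*R) hn x k
        = ((u:ℤ)+1) * delta R a - (u:ℤ) * (e - delta R a) := by
    intro a e hstruct
    rw [hm', hu, sum_blocks R hRodd (per (Q*R) hn x) (2*u+1)]
    have hinner : ∀ j : ℕ, ∑ i ∈ Finset.range R, (-1:ℤ)^i * per (Q*R) hn x (j * R + i)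
        = if j % 2 = 0 then delta R a else e - delta R a := by
      intro j
      rw [Finset.sum_range (fun i => (-1:ℤ)^i * per (Q*R) hn x (j * R + i))]
      have h2 : ∀ i : Fin R, per (Q*R) hn x (j * R + (i:ℕ))
          = if j % 2 = 0 then a i else e - a i := by
        intro i
        rw [hstruct j (i:ℕ) i.2]
      by_cases hj : j % 2 = 0
      · rw [if_pos hj]
        calc ∑ i : Fin R, (-1:ℤ)^(i:ℕ) * per (Q*R) hn x (j*R+(i:ℕ))
            = ∑ i : Fin R, (-1:ℤ)^(i:ℕ) * a i :=
              Finset.sum_congr rfl fun i _ => by rw [h2 i, if_pos hj]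
          _ = delta R a := rfl
      · rw [if_neg hj]
        calc ∑ i : Fin R, (-1:ℤ)^(i:ℕ) * per (Q*R) hn x (j*R+(i:ℕ))
            = ∑ i : Fin R, ((-1:ℤ)^(i:ℕ) * e - (-1:ℤ)^(i:ℕ) * a i) :=
              Finset.sum_congr rfl fun i _ => by rw [h2 i, if_neg hj]; ring
          _ = (∑ i : Fin R, (-1:ℤ)^(i:ℕ)) * e - delta R a := by
              rw [Finset.sum_sub_distrib, Finset.sum_mul]
              rfl
          _ = e - delta R a := by rw [hgeom, one_mul]
    simp only [hinner]
    exact alt_sum _ _ u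
  constructor
  · -- forward
    intro h
    have hC : ∀ (t : ℕ), t < Q*R → per (Q*R) hn x t + per (Q*R) hn x (t + m) = c :=
      (twist_fixed_iff hn x m hmodd).mp h
    -- key relation on blocks
    have hK : ∀ (j i : ℕ), i < R →
        per (Q*R) hn x (j * R + i) + per (Q*R) hn x ((j + P) * R + i) = c := by
      intro j i hi
      have e1 : j * R + i = ((j % Q) * R + i) + (j / Q) * (Q*R) := by
        conv_lhs => rw [← Nat.mod_add_div j Q]
        ring
      have e2 : (j + P) * R + i = (((j % Q) * R + i) + m) + (j / Q) * (Q*R) := by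
        rw [hm']
        conv_lhs => rw [← Nat.mod_add_div j Q]
        ring
      rw [e1, e2, per_add_mul, per_add_mul]
      exact hC _ (mul_add_lt (Nat.mod_lt j hQpos) hi)
    have hK2 : ∀ (j i : ℕ), i < R →
        per (Q*R) hn x ((j + 2 * P) * R + i) = per (Q*R) hn x (j * R + i) := by
      intro j i hi
      have h1 := hK j i hi
      have h2 := hK (j + P) i hi
      rw [show j + P + P = j + 2 * P by ring] at h2
      linarith
    -- step by 2
    obtain ⟨t, s, hts⟩ := exists_two P Q hPpos hQeven hQpos hcop
    have hB2 : ∀ (j i : ℕ), i < R →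
        per (Q*R) hn x ((j + 2) * R + i) = per (Q*R) hn x (j * R + i) := by
      intro j i hi
      have hfQ : ∀ j', per (Q*R) hn x ((j' + Q) * R + i) = per (Q*R) hn x (j' * R + i) := by
        intro j'
        have e1 : (j' + Q) * R + i = (j' * R + i) + 1 * (Q*R) := by ring
        rw [e1, per_add_mul]
      have hfQm : ∀ (v j' : ℕ),
          per (Q*R) hn x ((j' + v * Q) * R + i) = per (Q*R) hn x (j' * R + i) :=
        iter_step (f := fun j' => per (Q*R) hn x (j' * R + i)) hfQ
      have hf2Pm : ∀ (v j' : ℕ),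
          per (Q*R) hn x ((j' + v * (2 * P)) * R + i) = per (Q*R) hn x (j' * R + i) :=
        iter_step (f := fun j' => per (Q*R) hn x (j' * R + i)) (fun j' => hK2 j' i hi)
      calc per (Q*R) hn x ((j + 2) * R + i)
          = per (Q*R) hn x ((j + 2 + s * Q) * R + i) := (hfQm s (j+2)).symm
        _ = per (Q*R) hn x ((j + t * (2 * P)) * R + i) := by
            rw [Nat.add_assoc, hts]
        _ = per (Q*R) hn x (j * R + i) := hf2Pm t j
    have hpar : ∀ (j i : ℕ), i < R →
        per (Q*R) hn x (j * R + i) = per (Q*R) hn x ((j % 2) * R + i) := by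
      intro j i hi
      have h2m : ∀ (v j' : ℕ),
          per (Q*R) hn x ((j' + v * 2) * R + i) = per (Q*R) hn x (j' * R + i) :=
        iter_step (f := fun j' => per (Q*R) hn x (j' * R + i)) (fun j' => hB2 j' i hi)
      conv_lhs => rw [← Nat.mod_add_div' j 2]
      exact h2m (j / 2) (j % 2)
    have hB01 : ∀ (i : ℕ), i < R →
        per (Q*R) hn x (1 * R + i) = c - per (Q*R) hn x i := by
      intro i hi
      have h1 := hK 0 i hi
      rw [show (0:ℕ) * R + i = i by ring, show (0 + P) = P by ring] at h1
      have h2 := hpar P i hi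
      rw [show P % 2 = 1 by omega] at h2
      linarith
    have hBval : ∀ (j i : ℕ), i < R →
        per (Q*R) hn x (j * R + i)
          = if j % 2 = 0 then per (Q*R) hn x i else c - per (Q*R) hn x i := by
      intro j i hi
      rw [hpar j i hi]
      by_cases hj : j % 2 = 0
      · rw [if_pos hj, hj, show (0:ℕ) * R + i = i by ring]
      · rw [if_neg hj, show j % 2 = 1 by omega]
        exact hB01 i hi
    -- define a and conclude
    have hstruct : ∀ (j i : ℕ) (hi : i < R),
        per (Q*R) hn x (j * R + i)
          = if j % 2 = 0 then (fun i0 : Fin R => per (Q*R) hn x (i0:ℕ)) ⟨i, hi⟩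
            else c - (fun i0 : Fin R => per (Q*R) hn x (i0:ℕ)) ⟨i, hi⟩ := by
      intro j i hi
      rw [hBval j i hi]
    have hs := hsum (fun i0 : Fin R => per (Q*R) hn x (i0:ℕ)) c hstruct
    set D := delta R (fun i0 : Fin R => per (Q*R) hn x (i0:ℕ)) with hD
    have hceq : c = 2 * (((u:ℤ)+1) * D - (u:ℤ) * (c - D)) := by
      conv_lhs => rw [hc, hs]
    have hc2 : c = 2 * D := by
      have h2 : (2*(u:ℤ)+1) * c = (2*(u:ℤ)+1) * (2 * D) := by linarith
      exact mul_left_cancel₀ (by positivity) h2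
    refine ⟨fun i0 : Fin R => per (Q*R) hn x (i0:ℕ), fun j i => ?_⟩
    rw [hblk j i, hBval (j:ℕ) (i:ℕ) i.2]
    by_cases hj : (j:ℕ) % 2 = 0
    · rw [if_pos hj, if_pos hj]
    · rw [if_neg hj, if_neg hj]
      show c - per (Q*R) hn x (i:ℕ) = -(per (Q*R) hn x (i:ℕ)) + 2 * D
      rw [hc2]; ring
  · -- backward
    rintro ⟨a, ha⟩
    rw [twist_fixed_iff hn x m hmodd]
    have hstructQ : ∀ (j : ℕ) (hj : j < Q) (i : ℕ) (hi : i < R),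
        per (Q*R) hn x (j * R + i)
          = if j % 2 = 0 then a ⟨i, hi⟩ else 2 * delta R a - a ⟨i, hi⟩ := by
      intro j hj i hi
      have h1 : per (Q*R) hn x (j * R + i)
          = if j % 2 = 0 then a ⟨i, hi⟩ else tau R a ⟨i, hi⟩ := by
        have h2 := ha ⟨j, hj⟩ ⟨i, hi⟩
        rw [hblk] at h2
        exact h2
      rw [h1]
      by_cases hj2 : j % 2 = 0
      · rw [if_pos hj2, if_pos hj2]
      · rw [if_neg hj2, if_neg hj2]
        show -a ⟨i, hi⟩ + 2 * delta R a = 2 * delta R a - a ⟨i, hi⟩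
        ring
    have hstruct : ∀ (j i : ℕ) (hi : i < R),
        per (Q*R) hn x (j * R + i)
          = if j % 2 = 0 then a ⟨i, hi⟩ else 2 * delta R a - a ⟨i, hi⟩ := by
      intro j i hi
      have e1 : j * R + i = ((j % Q) * R + i) + (j / Q) * (Q*R) := by
        conv_lhs => rw [← Nat.mod_add_div j Q]
        ring
      rw [e1, per_add_mul, hstructQ (j % Q) (Nat.mod_lt j hQpos) i hi]
      have hmod : (j % Q) % 2 = j % 2 := by
        obtain ⟨Q', hQ'⟩ := hQeven
        set v := j % Q with hv
        set w := j / Q with hw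
        have hj' : j = v + Q * w := by rw [hv, hw, Nat.mod_add_div]
        rw [hj', hQ', show v + (Q' + Q') * w = v + (Q' * w) * 2 by ring,
            Nat.add_mul_mod_self_right]
      rw [hmod]
    have hs := hsum a (2 * delta R a) hstruct
    have hc2 : c = 2 * delta R a := by rw [hc, hs]; push_cast; ring
    intro t ht
    rw [← hc, hc2]
    set j := t / R with hj
    set i := t % R with hi
    have hiR : i < R := Nat.mod_lt _ hRpos
    have hdecomp : t = j * R + i := by
      rw [hj, hi, Nat.mul_comm]
      exact (Nat.div_add_mod t R).symm
    have e2 : t + m = (j + P) * R + i := by rw [hdecomp, hm']; ring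
    rw [e2, hdecomp, hstruct j i hiR, hstruct (j + P) i hiR]
    by_cases hj2 : j % 2 = 0
    · rw [if_pos hj2, if_neg (by omega)]
      ring
    · rw [if_neg hj2, if_pos (by omega)]
      ring
end
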